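/- arXiv:2306.12976 — 7 statements merged into one kernel-verified Lean document; each statement's English description precedes it below -/
import Mathlib

section
/- Let p ∈ ℕ, ℓ > 0, J = [[0, I_p],[I_p, 0]]. On H = L²((0,2ℓ); ℂᵖ) let (Af)(x) = i ∫₀ˣ f(t) dt, let S ∈ B(H), and let Π(x) be a p×2p matrix function with entries in L²(0,2ℓ). Suppose the operator identity holds: for all f ∈ H and a.e. x, (ASf)(x) − (SA*f)(x) = i Π(x) J ∫₀^{2ℓ} Π(t)* f(t) dt. For 0 < ξ ≤ 2ℓ let P_ξ : L²((0,2ℓ); ℂᵖ) → L²((0,ξ); ℂᵖ) be the restriction operator (P_ξ* the extension by zero), and set A_ξ = P_ξ A P_ξ*, S_ξ = P_ξ S P_ξ*. Then (i) P_ξ A = A_ξ P_ξ, and (ii) for all f ∈ L²((0,ξ); ℂᵖ) and a.e. x ∈ (0,ξ): (A_ξ S_ξ f)(x) − (S_ξ A_ξ* f)(x) = i Π(x) J ∫₀^{ξ} Π(t)* f(t) dt. -/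
open MeasureTheory Matrix Set

noncomputable section

/-- **Formula (3.14-) of the paper.**  On `H = L²((0,2ℓ);ℂᵖ)` let `A = i∫₀ˣ·dt` and let
`S ∈ B(H)` satisfy the operator identity `AS - SA* = iΠJΠ*`, where `Π(x)` is a
`p × 2p` matrix function with square-integrable entries.  With `P_ξ` the restriction to
`(0,ξ)` (whose adjoint `P_ξ*` is extension by zero), `A_ξ = P_ξ A P_ξ*` and
`S_ξ = P_ξ S P_ξ*`, one has: (i) `P_ξ A = A_ξ P_ξ`, and (ii)
`A_ξ S_ξ - S_ξ A_ξ* = i P_ξ Π J Π* P_ξ*`. -/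
theorem operator_identity_reduction
    (p : ℕ) (ℓ ξ : ℝ) (hℓ : 0 < ℓ) (hξ : 0 < ξ) (hξℓ : ξ ≤ 2*ℓ)
    (J : Matrix (Fin p ⊕ Fin p) (Fin p ⊕ Fin p) ℂ)
    (hJ : J = Matrix.fromBlocks 0 1 1 0)
    (Pm : ℝ → Matrix (Fin p) (Fin p ⊕ Fin p) ℂ)
    (hPm : ∀ i k, MemLp (fun x => Pm x i k) 2 (volume.restrict (Set.Ioc (0:ℝ) (2*ℓ))))
    (S : Lp (Fin p → ℂ) 2 (volume.restrict (Set.Ioc (0:ℝ) (2*ℓ)))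
      →L[ℂ] Lp (Fin p → ℂ) 2 (volume.restrict (Set.Ioc (0:ℝ) (2*ℓ))))
    -- the operator identity AS - SA* = iΠJΠ* on L²((0,2ℓ);ℂᵖ):
    (hid : ∀ f fa : Lp (Fin p → ℂ) 2 (volume.restrict (Set.Ioc (0:ℝ) (2*ℓ))),
      (⇑fa =ᵐ[volume.restrict (Set.Ioc (0:ℝ) (2*ℓ))]
        fun t => (-Complex.I) • ∫ s in Set.Ioc t (2*ℓ), f s) →
      ∀ᵐ x ∂(volume.restrict (Set.Ioc (0:ℝ) (2*ℓ))),
        (Complex.I • ∫ t in Set.Ioc (0:ℝ) x, S f t) - S fa x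
          = Complex.I • (Pm x * J).mulVec
              (∫ t in Set.Ioc (0:ℝ) (2*ℓ), (Pm t)ᴴ.mulVec (f t))) :
    -- (i) P_ξ A = A_ξ P_ξ
    (∀ f : Lp (Fin p → ℂ) 2 (volume.restrict (Set.Ioc (0:ℝ) (2*ℓ))),
      ∀ᵐ x ∂(volume.restrict (Set.Ioc (0:ℝ) ξ)),
        (Complex.I • ∫ t in Set.Ioc (0:ℝ) x, f t)
          = Complex.I • ∫ t in Set.Ioc (0:ℝ) x, (Set.Ioc (0:ℝ) ξ).indicator (⇑f) t) ∧
    -- (ii) A_ξ S_ξ - S_ξ A_ξ* = i P_ξ Π J Π* P_ξ*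
    (∀ f : Lp (Fin p → ℂ) 2 (volume.restrict (Set.Ioc (0:ℝ) ξ)),
      ∀ g ga : Lp (Fin p → ℂ) 2 (volume.restrict (Set.Ioc (0:ℝ) (2*ℓ))),
      (⇑g =ᵐ[volume.restrict (Set.Ioc (0:ℝ) (2*ℓ))] (Set.Ioc (0:ℝ) ξ).indicator (⇑f)) →
      (⇑ga =ᵐ[volume.restrict (Set.Ioc (0:ℝ) (2*ℓ))]
        (Set.Ioc (0:ℝ) ξ).indicator (fun t => (-Complex.I) • ∫ s in Set.Ioc t ξ, f s)) →
      ∀ᵐ x ∂(volume.restrict (Set.Ioc (0:ℝ) ξ)),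
        (Complex.I • ∫ t in Set.Ioc (0:ℝ) x, (Set.Ioc (0:ℝ) ξ).indicator (⇑(S g)) t)
            - (Set.Ioc (0:ℝ) ξ).indicator (⇑(S ga)) x
          = Complex.I • (Pm x * J).mulVec
              (∫ t in Set.Ioc (0:ℝ) ξ, (Pm t)ᴴ.mulVec (f t))) := by
  constructor
  · intro f
    filter_upwards [ae_restrict_mem measurableSet_Ioc] with x hx
    congr 1
    rw [setIntegral_indicator measurableSet_Ioc, Set.Ioc_inter_Ioc,
      min_eq_left hx.2, max_self]
  · intro f g ga hg hga
    have key : ⇑ga =ᵐ[volume.restrict (Set.Ioc (0:ℝ) (2*ℓ))]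
        fun t => (-Complex.I) • ∫ s in Set.Ioc t (2*ℓ), g s := by
      filter_upwards [hga, ae_restrict_mem measurableSet_Ioc] with t hta ht
      have hgint : ∫ s in Set.Ioc t (2*ℓ), g s = ∫ s in Set.Ioc t ξ, f s := by
        have hsub : Set.Ioc t (2*ℓ) ⊆ Set.Ioc (0:ℝ) (2*ℓ) :=
          Set.Ioc_subset_Ioc_left ht.1.le
        have hg' := ae_restrict_of_ae_restrict_of_subset hsub hg
        calc ∫ s in Set.Ioc t (2*ℓ), g s
            = ∫ s in Set.Ioc t (2*ℓ), (Set.Ioc (0:ℝ) ξ).indicator (⇑f) s :=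
              integral_congr_ae hg'
          _ = ∫ s in Set.Ioc t (2*ℓ) ∩ Set.Ioc (0:ℝ) ξ, f s :=
              setIntegral_indicator measurableSet_Ioc
          _ = ∫ s in Set.Ioc t ξ, f s := by
              rw [Set.Ioc_inter_Ioc, max_eq_left ht.1.le, min_eq_right hξℓ]
      rw [hta]
      simp only [hgint]
      by_cases htξ : t ≤ ξ
      · rw [Set.indicator_of_mem (show t ∈ Set.Ioc (0:ℝ) ξ from ⟨ht.1, htξ⟩)]
      · rw [Set.indicator_of_notMem (fun hm => htξ hm.2),
          Set.Ioc_eq_empty (fun hlt => htξ hlt.le), Measure.restrict_empty,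
          integral_zero_measure, smul_zero]
    have main := hid g ga key
    have main' := ae_restrict_of_ae_restrict_of_subset
      (Set.Ioc_subset_Ioc_right hξℓ) main
    have hR : ∫ t in Set.Ioc (0:ℝ) (2*ℓ), (Pm t)ᴴ.mulVec (g t)
        = ∫ t in Set.Ioc (0:ℝ) ξ, (Pm t)ᴴ.mulVec (f t) := by
      have hae : ∀ᵐ t ∂(volume.restrict (Set.Ioc (0:ℝ) (2*ℓ))),
          (Pm t)ᴴ.mulVec (g t)
            = (Set.Ioc (0:ℝ) ξ).indicator (fun s => (Pm s)ᴴ.mulVec (f s)) t := by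
        filter_upwards [hg] with t htg
        rw [htg]
        by_cases h : t ∈ Set.Ioc (0:ℝ) ξ
        · rw [Set.indicator_of_mem h, Set.indicator_of_mem h]
        · rw [Set.indicator_of_notMem h, Set.indicator_of_notMem h,
            Matrix.mulVec_zero]
      rw [integral_congr_ae hae, setIntegral_indicator measurableSet_Ioc,
        Set.Ioc_inter_Ioc, min_eq_right hξℓ, max_self]
    filter_upwards [main', ae_restrict_mem measurableSet_Ioc] with x hx hxm
    have hint : ∫ t in Set.Ioc (0:ℝ) x, (Set.Ioc (0:ℝ) ξ).indicator (⇑(S g)) t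
        = ∫ t in Set.Ioc (0:ℝ) x, S g t := by
      rw [setIntegral_indicator measurableSet_Ioc, Set.Ioc_inter_Ioc,
        min_eq_left hxm.2, max_self]
    rw [Set.indicator_of_mem hxm, hint, ← hR]
    exact hx

end
end

section
/- Let ℓ > 0, let 0 < ε < T₁, 0 < ε < T₂, set Γ = (−T₁, −ε) ∪ (ε, T₂) ⊂ ℝ, and let μ be a finite positive Borel measure on ℝ. On L²((0,2ℓ); ℂ) define: (Af)(x) = i ∫₀ˣ f(t) dt, (A*f)(x) = −i ∫ₓ^{2ℓ} f(t) dt, (Ŝf)(x) = ∫_Γ e^{itx} ( ∫₀^{2ℓ} e^{−itξ} f(ξ) dξ ) dμ(t), and Φ̂₁(x) = −i ∫_Γ ( (e^{itx} − 1)/t + t/(t² + 1) ) dμ(t). Then Ŝ is a bounded operator and for every f ∈ L²((0,2ℓ); ℂ) and a.e. x ∈ (0,2ℓ): (AŜf)(x) − (ŜA*f)(x) = i ( Φ̂₁(x) ∫₀^{2ℓ} f(ξ) dξ + ∫₀^{2ℓ} conj(Φ̂₁(ξ)) f(ξ) dξ ). -/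
open MeasureTheory Set

noncomputable section

/-- The operator `(Ŝf)(x) = ∫_Γ e^{itx} (∫₀^{2ℓ} e^{-itξ} f(ξ) dξ) dμ(t)`. -/
def Shat (ℓ : ℝ) (Γ : Set ℝ) (μ : MeasureTheory.Measure ℝ) (f : ℝ → ℂ) (x : ℝ) : ℂ :=
  ∫ t in Γ, Complex.exp (Complex.I * t * x)
    * (∫ ξ in Set.Ioc (0:ℝ) (2*ℓ), Complex.exp (-(Complex.I * t * ξ)) * f ξ) ∂μ

/-- The function `Φ̂₁(x) = -i∫_Γ ((e^{itx}-1)/t + t/(t²+1)) dμ(t)`. -/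
def Phihat (Γ : Set ℝ) (μ : MeasureTheory.Measure ℝ) (x : ℝ) : ℂ :=
  -Complex.I * ∫ t in Γ, ((Complex.exp (Complex.I * t * x) - 1) / t + t / (t^2 + 1)) ∂μ

namespace TruncAux

open scoped ENNReal

lemma nexp1 (a b : ℝ) : ‖Complex.exp (Complex.I * a * b)‖ = 1 := by
  rw [Complex.norm_exp]
  norm_num [Complex.mul_re]

lemma nexp2 (a b : ℝ) : ‖Complex.exp (-(Complex.I * a * b))‖ = 1 := by
  rw [Complex.norm_exp]
  norm_num [Complex.mul_re]

lemma tsq_bound (t : ℝ) : ‖(t:ℂ) / ((t:ℂ)^2 + 1)‖ ≤ 1 := by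
  have h : (t:ℂ)/((t:ℂ)^2+1) = ((t/(t^2+1):ℝ):ℂ) := by push_cast; ring
  rw [h, Complex.norm_real, Real.norm_eq_abs, abs_div,
    abs_of_pos (show (0:ℝ) < t^2+1 by positivity), div_le_one (by positivity)]
  nlinarith [sq_nonneg (|t| - 1), sq_abs t]

lemma tsq_ne (t : ℝ) : ((t:ℂ)^2 + 1) ≠ 0 := by
  have h : (t:ℂ)^2+1 = ((t^2+1:ℝ):ℂ) := by push_cast; ring
  rw [h]
  exact_mod_cast (by positivity : (t:ℝ)^2+1 ≠ 0)

lemma div_bound {ε : ℝ} (hε : 0 < ε) {c : ℂ} (hc : ε ≤ ‖c‖) {E : ℂ} (hE : ‖E‖ ≤ 1) :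
    ‖(E - 1)/c‖ ≤ 2/ε := by
  rw [norm_div]
  exact div_le_div₀ (by norm_num) ((norm_sub_le _ _).trans (by rw [norm_one]; linarith)) hε hc

lemma finJ {a b : ℝ} : IsFiniteMeasure (volume.restrict (Set.Ioc a b)) := by
  constructor
  simp [Measure.restrict_apply_univ, Real.volume_Ioc]

/-- Fubini for the term `AŜf`. -/
lemma swap1 (ε x : ℝ) (hε : 0 < ε) (hx0 : 0 < x)
    (μ : Measure ℝ) [IsFiniteMeasure μ] (Γ : Set ℝ) (hΓm : MeasurableSet Γ)
    (g : ℝ → ℂ) (hgsm : StronglyMeasurable g) (M : ℝ) (hgb : ∀ t, ‖g t‖ ≤ M)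
    (hIt : ∀ t ∈ Γ, (Complex.I * (t:ℂ)) ≠ 0) :
    (∫ u in Set.Ioc (0:ℝ) x, ∫ t in Γ, Complex.exp (Complex.I * t * u) * g t ∂μ)
      = ∫ t in Γ, ((Complex.exp (Complex.I * t * x) - 1) / (Complex.I * t)) * g t ∂μ := by
  haveI fin2 : IsFiniteMeasure (volume.restrict (Set.Ioc (0:ℝ) x)) := finJ
  have hswap : (∫ u in Set.Ioc (0:ℝ) x, ∫ t in Γ, Complex.exp (Complex.I * t * u) * g t ∂μ)
      = ∫ t in Γ, (∫ u in Set.Ioc (0:ℝ) x, Complex.exp (Complex.I * t * u) * g t) ∂μ := by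
    apply integral_integral_swap
    have hm : AEStronglyMeasurable (fun z : ℝ × ℝ => Complex.exp (Complex.I * z.2 * z.1) * g z.2)
        ((volume.restrict (Set.Ioc (0:ℝ) x)).prod (μ.restrict Γ)) := by
      apply Measurable.aestronglyMeasurable
      have := hgsm.measurable
      fun_prop
    apply Integrable.mono' (integrable_const M) ?_ ?_
    · exact hm
    · apply ae_of_all
      rintro ⟨u, t⟩
      simp only [Function.uncurry]
      calc ‖Complex.exp (Complex.I * t * u) * g t‖ = ‖g t‖ := by
            rw [norm_mul, nexp1, one_mul]
      _ ≤ M := hgb t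
  rw [hswap]
  refine setIntegral_congr_ae hΓm (ae_of_all _ fun t ht => ?_)
  rw [integral_mul_const, ← intervalIntegral.integral_of_le hx0.le,
    integral_exp_mul_complex (hIt t ht)]
  norm_num

/-- Fubini for the inner integral of `ŜA*f`. -/
lemma inner_eval (ℓ : ℝ) (f : ℝ → ℂ) (hsm : StronglyMeasurable f)
    (hfi : Integrable f (volume.restrict (Set.Ioc (0:ℝ) (2*ℓ))))
    (t : ℝ) (hIt : (Complex.I * (t:ℂ)) ≠ 0) :
    (∫ ξ in Set.Ioc (0:ℝ) (2*ℓ), Complex.exp (-(Complex.I * t * ξ))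
        * (-Complex.I * ∫ s in Set.Ioc ξ (2*ℓ), f s))
      = ∫ s in Set.Ioc (0:ℝ) (2*ℓ),
          ((Complex.exp (-(Complex.I * t * s)) - 1) / (-(Complex.I * t))) * (-Complex.I * f s) := by
  haveI fin1 : IsFiniteMeasure (volume.restrict (Set.Ioc (0:ℝ) (2*ℓ))) := finJ
  have hJm : MeasurableSet (Set.Ioc (0:ℝ) (2*ℓ)) := measurableSet_Ioc
  have hmf : Measurable f := hsm.measurable
  have e1 : ∀ ξ ∈ Set.Ioc (0:ℝ) (2*ℓ),
      Complex.exp (-(Complex.I*t*ξ)) * (-Complex.I * ∫ s in Set.Ioc ξ (2*ℓ), f s)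
      = ∫ s in Set.Ioc (0:ℝ) (2*ℓ),
          Complex.exp (-(Complex.I*t*ξ)) * -Complex.I * (Set.Ioi ξ).indicator f s := by
    intro ξ hξ
    have hset : Set.Ioc ξ (2*ℓ) = Set.Ioc (0:ℝ) (2*ℓ) ∩ Set.Ioi ξ := by
      ext s
      simp only [Set.mem_Ioc, Set.mem_inter_iff, Set.mem_Ioi]
      exact ⟨fun ⟨h1,h2⟩ => ⟨⟨lt_trans hξ.1 h1, h2⟩, h1⟩, fun ⟨⟨_,h2⟩,h3⟩ => ⟨h3, h2⟩⟩
    rw [hset, ← setIntegral_indicator measurableSet_Ioi, integral_const_mul]; ring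
  rw [setIntegral_congr_fun hJm e1]
  have hswap : (∫ ξ in Set.Ioc (0:ℝ) (2*ℓ), ∫ s in Set.Ioc (0:ℝ) (2*ℓ),
        Complex.exp (-(Complex.I*t*ξ)) * -Complex.I * (Set.Ioi ξ).indicator f s)
      = ∫ s in Set.Ioc (0:ℝ) (2*ℓ), ∫ ξ in Set.Ioc (0:ℝ) (2*ℓ),
        Complex.exp (-(Complex.I*t*ξ)) * -Complex.I * (Set.Ioi ξ).indicator f s := by
    apply integral_integral_swap
    have hind : (fun z : ℝ × ℝ => (Set.Ioi z.1).indicator f z.2)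
        = Set.indicator {z : ℝ × ℝ | z.1 < z.2} (fun z => f z.2) := by
      ext z
      by_cases hz : z.1 < z.2 <;> simp [Set.indicator_apply, Set.mem_Ioi, hz]
    have hm : AEStronglyMeasurable (fun z : ℝ × ℝ =>
        Complex.exp (-(Complex.I*t*z.1)) * -Complex.I * (Set.Ioi z.1).indicator f z.2)
        ((volume.restrict (Set.Ioc (0:ℝ) (2*ℓ))).prod
          (volume.restrict (Set.Ioc (0:ℝ) (2*ℓ)))) := by
      apply Measurable.aestronglyMeasurable
      apply Measurable.mul
      · fun_prop
      · rw [hind]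
        exact ((hmf.comp measurable_snd).indicator
          (measurableSet_lt measurable_fst measurable_snd))
    have hdom : Integrable (fun z : ℝ × ℝ => ‖f z.2‖)
        ((volume.restrict (Set.Ioc (0:ℝ) (2*ℓ))).prod
          (volume.restrict (Set.Ioc (0:ℝ) (2*ℓ)))) := by
      simpa using (integrable_const (1:ℝ)).mul_prod hfi.norm
    apply Integrable.mono' hdom ?_ ?_
    · exact hm
    · apply ae_of_all
      rintro ⟨ξ, s⟩
      simp only [Function.uncurry]
      calc ‖Complex.exp (-(Complex.I*t*ξ)) * -Complex.I * (Set.Ioi ξ).indicator f s‖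
          = ‖(Set.Ioi ξ).indicator f s‖ := by
            rw [norm_mul, norm_mul, norm_neg, Complex.norm_I, nexp2]
            ring
      _ ≤ ‖f s‖ := norm_indicator_le_norm_self f s
  rw [hswap]
  refine setIntegral_congr_fun hJm fun s hs => ?_
  have h1 : ∀ ξ : ℝ, Complex.exp (-(Complex.I*t*ξ)) * -Complex.I * (Set.Ioi ξ).indicator f s
      = (Set.Iio s).indicator
          (fun ξ => Complex.exp (-(Complex.I*t*ξ)) * (-Complex.I * f s)) ξ := by
    intro ξ
    by_cases hξs : ξ < s <;>
      simp [Set.indicator_apply, Set.mem_Ioi, Set.mem_Iio, hξs, mul_assoc]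
  simp only [h1]
  rw [setIntegral_indicator measurableSet_Iio]
  have hset2 : Set.Ioc (0:ℝ) (2*ℓ) ∩ Set.Iio s = Set.Ioo 0 s := by
    ext ξ
    simp only [Set.mem_Ioc, Set.mem_inter_iff, Set.mem_Iio, Set.mem_Ioo]
    exact ⟨fun ⟨⟨a,b⟩,c⟩ => ⟨a, c⟩, fun ⟨a,c⟩ => ⟨⟨a, le_trans c.le hs.2⟩, c⟩⟩
  rw [hset2, ← integral_Ioc_eq_integral_Ioo, ← intervalIntegral.integral_of_le hs.1.le,
    intervalIntegral.integral_mul_const]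
  have hc : ∀ ξ : ℝ, -(Complex.I*(t:ℂ)*(ξ:ℂ)) = (-(Complex.I*(t:ℂ))) * (ξ:ℂ) := fun ξ => by ring
  simp only [hc]
  rw [integral_exp_mul_complex (neg_ne_zero.2 hIt)]
  norm_num

/-- conjugate of `Phihat`. -/
lemma phihat_conj (Γ : Set ℝ) (μ : Measure ℝ) (ξ : ℝ) :
    (starRingEnd ℂ) (Phihat Γ μ ξ)
      = Complex.I * ∫ t in Γ,
          ((Complex.exp (-(Complex.I * t * ξ)) - 1) / t + t / ((t:ℂ)^2 + 1)) ∂μ := by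
  rw [Phihat, map_mul, ← integral_conj]
  congr 1
  · simp
  · refine integral_congr_ae (Filter.Eventually.of_forall fun t => ?_)
    simp only [map_add, map_div₀, map_sub, map_one, map_pow, map_mul, Complex.conj_ofReal,
      ← Complex.exp_conj, Complex.conj_I]
    ring_nf

set_option maxHeartbeats 2000000 in
/-- The main pointwise identity, for strongly measurable integrable `f`. -/
lemma key (ℓ ε : ℝ) (hℓ : 0 < ℓ) (hε : 0 < ε)
    (μ : Measure ℝ) [IsFiniteMeasure μ] (Γ : Set ℝ) (hΓm : MeasurableSet Γ)
    (hΓ : ∀ t ∈ Γ, ε ≤ |t|)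
    (f : ℝ → ℂ) (hsm : StronglyMeasurable f)
    (hfi : Integrable f (volume.restrict (Set.Ioc (0:ℝ) (2*ℓ))))
    {x : ℝ} (hx : x ∈ Set.Ioc (0:ℝ) (2*ℓ)) :
    Complex.I * (∫ t in Set.Ioc (0:ℝ) x, Shat ℓ Γ μ f t)
        - Shat ℓ Γ μ (fun t => -Complex.I * ∫ s in Set.Ioc t (2*ℓ), f s) x
      = Complex.I * (Phihat Γ μ x * (∫ ξ in Set.Ioc (0:ℝ) (2*ℓ), f ξ)
          + ∫ ξ in Set.Ioc (0:ℝ) (2*ℓ), (starRingEnd ℂ) (Phihat Γ μ ξ) * f ξ) := by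
  obtain ⟨hx0, hx2⟩ := hx
  haveI fin1 : IsFiniteMeasure (volume.restrict (Set.Ioc (0:ℝ) (2*ℓ))) := finJ
  have hJm : MeasurableSet (Set.Ioc (0:ℝ) (2*ℓ)) := measurableSet_Ioc
  have hΓ0 : ∀ t ∈ Γ, (t:ℝ) ≠ 0 := by
    intro t ht h
    have := hΓ t ht
    rw [h] at this; simp at this; linarith
  have hΓ0' : ∀ t ∈ Γ, (t:ℂ) ≠ 0 := fun t ht => Complex.ofReal_ne_zero.2 (hΓ0 t ht)
  have hIt : ∀ t ∈ Γ, (Complex.I * (t:ℂ)) ≠ 0 :=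
    fun t ht => mul_ne_zero Complex.I_ne_zero (hΓ0' t ht)
  have hnt : ∀ t : ℝ, ‖(t:ℂ)‖ = |t| := fun t => by
    rw [Complex.norm_real, Real.norm_eq_abs]
  have hnIt : ∀ t : ℝ, ‖Complex.I * (t:ℂ)‖ = |t| := fun t => by
    rw [norm_mul, Complex.norm_I, one_mul, hnt]
  have hmf : Measurable f := hsm.measurable
  -- the constant M
  set M : ℝ := ∫ ξ in Set.Ioc (0:ℝ) (2*ℓ), ‖f ξ‖ with hM
  -- the function g
  set g : ℝ → ℂ := fun t => ∫ ξ in Set.Ioc (0:ℝ) (2*ℓ),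
      Complex.exp (-(Complex.I * t * ξ)) * f ξ with hg
  have hgsm : StronglyMeasurable g := by
    have hF : StronglyMeasurable fun p : ℝ × ℝ =>
        Complex.exp (-(Complex.I * p.1 * p.2)) * f p.2 := by
      apply Measurable.stronglyMeasurable
      fun_prop
    exact hF.integral_prod_right'
  have hgm : Measurable g := hgsm.measurable
  have hgb : ∀ t, ‖g t‖ ≤ M := by
    intro t
    calc ‖g t‖ ≤ ∫ ξ in Set.Ioc (0:ℝ) (2*ℓ), ‖Complex.exp (-(Complex.I*t*ξ)) * f ξ‖ :=
          norm_integral_le_integral_norm _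
    _ = M := by simp only [norm_mul, nexp2, one_mul, hM]
  have hM0 : 0 ≤ M := le_trans (norm_nonneg _) (hgb 0)
  -- the function h
  set h : ℝ → ℂ := fun t => ∫ s in Set.Ioc (0:ℝ) (2*ℓ),
      ((Complex.exp (-(Complex.I * t * s)) - 1) / (-(Complex.I * t))) * (-Complex.I * f s)
    with hh
  have hhsm : StronglyMeasurable h := by
    have hF : StronglyMeasurable fun p : ℝ × ℝ =>
        ((Complex.exp (-(Complex.I * p.1 * p.2)) - 1) / (-(Complex.I * p.1)))
          * (-Complex.I * f p.2) := by
      apply Measurable.stronglyMeasurable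
      fun_prop
    exact hF.integral_prod_right'
  have hhb : ∀ t ∈ Γ, ‖h t‖ ≤ 2/ε * M := by
    intro t ht
    calc ‖h t‖ ≤ ∫ s in Set.Ioc (0:ℝ) (2*ℓ),
          ‖((Complex.exp (-(Complex.I * t * s)) - 1) / (-(Complex.I * t)))
            * (-Complex.I * f s)‖ := norm_integral_le_integral_norm _
    _ ≤ ∫ s in Set.Ioc (0:ℝ) (2*ℓ), 2/ε * ‖f s‖ := by
        apply integral_mono_of_nonneg (ae_of_all _ fun s => norm_nonneg _)
          (hfi.norm.const_mul _)
        apply ae_of_all; intro s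
        simp only [norm_mul, norm_neg, Complex.norm_I, one_mul]
        apply mul_le_mul_of_nonneg_right ?_ (norm_nonneg _)
        apply div_bound hε ?_ (le_of_eq (nexp2 t s))
        rw [norm_neg, hnIt]; exact hΓ t ht
    _ = 2/ε * M := integral_const_mul _ _
  -- the function δ
  set δ : ℝ → ℂ := fun t => ∫ ξ in Set.Ioc (0:ℝ) (2*ℓ),
      ((Complex.exp (-(Complex.I * t * ξ)) - 1) / t + t / ((t:ℂ)^2 + 1)) * f ξ with hδ
  have hwb : ∀ t ∈ Γ, ∀ ξ : ℝ,
      ‖(Complex.exp (-(Complex.I*t*ξ)) - 1)/(t:ℂ) + (t:ℂ)/((t:ℂ)^2+1)‖ ≤ 2/ε + 1 :=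
    fun t ht ξ => (norm_add_le _ _).trans
      (add_le_add (div_bound hε (by rw [hnt]; exact hΓ t ht) (le_of_eq (nexp2 t ξ)))
        (tsq_bound t))
  have hδsm : StronglyMeasurable δ := by
    have hF : StronglyMeasurable fun p : ℝ × ℝ =>
        ((Complex.exp (-(Complex.I * p.1 * p.2)) - 1) / (p.1:ℂ)
          + (p.1:ℂ) / ((p.1:ℂ)^2 + 1)) * f p.2 := by
      apply Measurable.stronglyMeasurable
      fun_prop
    exact hF.integral_prod_right'
  have hδb : ∀ t ∈ Γ, ‖δ t‖ ≤ (2/ε + 1) * M := by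
    intro t ht
    calc ‖δ t‖ ≤ ∫ ξ in Set.Ioc (0:ℝ) (2*ℓ),
          ‖((Complex.exp (-(Complex.I * t * ξ)) - 1) / t + t / ((t:ℂ)^2 + 1)) * f ξ‖ :=
          norm_integral_le_integral_norm _
    _ ≤ ∫ ξ in Set.Ioc (0:ℝ) (2*ℓ), (2/ε + 1) * ‖f ξ‖ := by
        apply integral_mono_of_nonneg (ae_of_all _ fun s => norm_nonneg _)
          (hfi.norm.const_mul _)
        apply ae_of_all; intro ξ
        simp only [norm_mul]
        exact mul_le_mul_of_nonneg_right (hwb t ht ξ) (norm_nonneg _)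
    _ = (2/ε + 1) * M := integral_const_mul _ _
  have hδint : Integrable δ (μ.restrict Γ) := by
    apply Integrable.mono' (integrable_const ((2/ε + 1) * M)) hδsm.aestronglyMeasurable
    filter_upwards [ae_restrict_mem hΓm] with t ht
    exact hδb t ht
  -- step 1 : AŜf
  have step1 : Complex.I * (∫ u in Set.Ioc (0:ℝ) x, Shat ℓ Γ μ f u)
      = ∫ t in Γ, Complex.I
          * (((Complex.exp (Complex.I*t*x) - 1)/(Complex.I*t)) * g t) ∂μ := by
    have hrfl : ∀ u : ℝ, Shat ℓ Γ μ f u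
        = ∫ t in Γ, Complex.exp (Complex.I * t * u) * g t ∂μ := fun u => rfl
    simp only [hrfl]
    rw [swap1 ε x hε hx0 μ Γ hΓm g hgsm M hgb hIt, integral_const_mul]
  -- step 2 : ŜA*f
  have step2 : Shat ℓ Γ μ (fun t => -Complex.I * ∫ s in Set.Ioc t (2*ℓ), f s) x
      = ∫ t in Γ, Complex.exp (Complex.I*t*x) * h t ∂μ := by
    simp only [Shat]
    refine setIntegral_congr_ae hΓm (ae_of_all _ fun t ht => ?_)
    congr 1
    exact inner_eval ℓ f hsm hfi t (hIt t ht)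
  -- step 3 : the conjugate term
  have step3 : (∫ ξ in Set.Ioc (0:ℝ) (2*ℓ), (starRingEnd ℂ) (Phihat Γ μ ξ) * f ξ)
      = Complex.I * ∫ t in Γ, δ t ∂μ := by
    calc (∫ ξ in Set.Ioc (0:ℝ) (2*ℓ), (starRingEnd ℂ) (Phihat Γ μ ξ) * f ξ)
        = ∫ ξ in Set.Ioc (0:ℝ) (2*ℓ), Complex.I * ((∫ t in Γ,
            ((Complex.exp (-(Complex.I * t * ξ)) - 1) / t + t / ((t:ℂ)^2 + 1)) ∂μ) * f ξ) := by
          refine setIntegral_congr_fun hJm fun ξ _ => ?_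
          rw [phihat_conj, mul_assoc]
    _ = Complex.I * ∫ ξ in Set.Ioc (0:ℝ) (2*ℓ), (∫ t in Γ,
            ((Complex.exp (-(Complex.I * t * ξ)) - 1) / t + t / ((t:ℂ)^2 + 1)) ∂μ) * f ξ :=
          integral_const_mul _ _
    _ = Complex.I * ∫ ξ in Set.Ioc (0:ℝ) (2*ℓ), ∫ t in Γ,
            ((Complex.exp (-(Complex.I * t * ξ)) - 1) / t + t / ((t:ℂ)^2 + 1)) * f ξ ∂μ := by
          congr 1
          exact setIntegral_congr_fun hJm fun ξ _ => (integral_mul_const _ _).symm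
    _ = Complex.I * ∫ t in Γ, δ t ∂μ := by
          congr 1
          apply integral_integral_swap
          have hm : AEStronglyMeasurable (fun z : ℝ × ℝ =>
              ((Complex.exp (-(Complex.I * z.2 * z.1)) - 1) / (z.2:ℂ)
                + (z.2:ℂ) / ((z.2:ℂ)^2 + 1)) * f z.1)
              ((volume.restrict (Set.Ioc (0:ℝ) (2*ℓ))).prod (μ.restrict Γ)) := by
            apply Measurable.aestronglyMeasurable
            fun_prop
          have hae2 : ∀ᵐ z : ℝ × ℝ
              ∂((volume.restrict (Set.Ioc (0:ℝ) (2*ℓ))).prod (μ.restrict Γ)), z.2 ∈ Γ := by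
            rw [ae_iff]
            have hset : {z : ℝ × ℝ | ¬ z.2 ∈ Γ} = (Set.univ : Set ℝ) ×ˢ Γᶜ := by
              ext z; simp
            rw [hset, Measure.prod_prod, Measure.restrict_apply hΓm.compl,
              Set.compl_inter_self, measure_empty, mul_zero]
          have hdom : Integrable (fun z : ℝ × ℝ => (2/ε + 1) * ‖f z.1‖)
              ((volume.restrict (Set.Ioc (0:ℝ) (2*ℓ))).prod (μ.restrict Γ)) := by
            simpa using (hfi.norm.const_mul (2/ε + 1)).mul_prod (integrable_const (1:ℝ))
          apply Integrable.mono' hdom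
          · exact hm
          · filter_upwards [hae2]
            rintro ⟨ξ, t⟩ ht
            simp only [Function.uncurry]
            rw [norm_mul]
            exact mul_le_mul_of_nonneg_right (hwb t ht ξ) (norm_nonneg _)
  -- step 4 : the Phihat x term
  have step4 : Complex.I * (Phihat Γ μ x * (∫ ξ in Set.Ioc (0:ℝ) (2*ℓ), f ξ))
      = ∫ t in Γ, ((Complex.exp (Complex.I * t * x) - 1) / t + t / ((t:ℂ)^2 + 1))
          * (∫ ξ in Set.Ioc (0:ℝ) (2*ℓ), f ξ) ∂μ := by
    rw [Phihat]
    rw [show Complex.I * ((-Complex.I * ∫ t in Γ,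
          ((Complex.exp (Complex.I * t * x) - 1) / t + t / ((t:ℂ)^2 + 1)) ∂μ)
          * (∫ ξ in Set.Ioc (0:ℝ) (2*ℓ), f ξ))
        = -(Complex.I * Complex.I) * ((∫ t in Γ,
          ((Complex.exp (Complex.I * t * x) - 1) / t + t / ((t:ℂ)^2 + 1)) ∂μ)
          * (∫ ξ in Set.Ioc (0:ℝ) (2*ℓ), f ξ)) from by ring]
    rw [Complex.I_mul_I, neg_neg, one_mul]
    exact (integral_mul_const _ _).symm
  -- integrability of the 4 t-functions
  have hA1int : Integrable (fun t : ℝ => Complex.I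
      * (((Complex.exp (Complex.I*t*x) - 1)/(Complex.I*t)) * g t)) (μ.restrict Γ) := by
    apply Integrable.mono' (integrable_const (2/ε * M))
    · apply Measurable.aestronglyMeasurable
      fun_prop
    · filter_upwards [ae_restrict_mem hΓm] with t ht
      rw [norm_mul, Complex.norm_I, one_mul, norm_mul]
      apply mul_le_mul (div_bound hε (by rw [hnIt]; exact hΓ t ht) (le_of_eq (nexp1 t x)))
        (hgb t) (norm_nonneg _) (by positivity)
  have hA2int : Integrable (fun t : ℝ => Complex.exp (Complex.I*t*x) * h t) (μ.restrict Γ) := by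
    apply Integrable.mono' (integrable_const (2/ε * M))
    · exact ((Measurable.stronglyMeasurable (by fun_prop)).mul hhsm).aestronglyMeasurable
    · filter_upwards [ae_restrict_mem hΓm] with t ht
      rw [norm_mul, nexp1, one_mul]
      exact hhb t ht
  have hB1int : Integrable (fun t : ℝ =>
      ((Complex.exp (Complex.I * t * x) - 1) / t + t / ((t:ℂ)^2 + 1))
        * (∫ ξ in Set.Ioc (0:ℝ) (2*ℓ), f ξ)) (μ.restrict Γ) := by
    apply Integrable.mono'
      (integrable_const ((2/ε + 1) * ‖∫ ξ in Set.Ioc (0:ℝ) (2*ℓ), f ξ‖))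
    · apply Measurable.aestronglyMeasurable
      fun_prop
    · filter_upwards [ae_restrict_mem hΓm] with t ht
      rw [norm_mul]
      refine mul_le_mul_of_nonneg_right ?_ (norm_nonneg _)
      exact (norm_add_le _ _).trans
        (add_le_add (div_bound hε (by rw [hnt]; exact hΓ t ht) (le_of_eq (nexp1 t x)))
          (tsq_bound t))
  -- assemble
  rw [step1, step2, mul_add, step4, step3, ← mul_assoc, Complex.I_mul_I, neg_one_mul,
    ← sub_eq_add_neg, ← integral_sub hA1int hA2int, ← integral_sub hB1int hδint]
  refine setIntegral_congr_ae hΓm (ae_of_all _ fun t ht => ?_)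
  -- pointwise identity in t
  have ht0 : (t:ℂ) ≠ 0 := hΓ0' t ht
  have h2 : Complex.I * (t:ℂ) ≠ 0 := hIt t ht
  have h3 : ((t:ℂ)^2+1) ≠ 0 := tsq_ne t
  have hgi : Integrable (fun s : ℝ => Complex.exp (-(Complex.I * t * s)) * f s)
      (volume.restrict (Set.Ioc (0:ℝ) (2*ℓ))) := by
    apply Integrable.bdd_mul hfi (by apply Measurable.aestronglyMeasurable; fun_prop)
    exact ae_of_all _ fun s => le_of_eq (nexp2 t s)
  have hA1t : Complex.I * (((Complex.exp (Complex.I*t*x) - 1)/(Complex.I*t)) * g t)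
      = ∫ s in Set.Ioc (0:ℝ) (2*ℓ),
          (Complex.I * ((Complex.exp (Complex.I*t*x) - 1)/(Complex.I*t)))
            * (Complex.exp (-(Complex.I * t * s)) * f s) := by
    rw [← mul_assoc]
    simp only [hg]
    exact (integral_const_mul _ _).symm
  have hA2t : Complex.exp (Complex.I*t*x) * h t
      = ∫ s in Set.Ioc (0:ℝ) (2*ℓ), Complex.exp (Complex.I*t*x)
          * (((Complex.exp (-(Complex.I * t * s)) - 1) / (-(Complex.I * t)))
            * (-Complex.I * f s)) := by
    simp only [hh]
    exact (integral_const_mul _ _).symm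
  have hB1t : ((Complex.exp (Complex.I * t * x) - 1) / t + t / ((t:ℂ)^2 + 1))
        * (∫ ξ in Set.Ioc (0:ℝ) (2*ℓ), f ξ)
      = ∫ s in Set.Ioc (0:ℝ) (2*ℓ),
          ((Complex.exp (Complex.I * t * x) - 1) / t + t / ((t:ℂ)^2 + 1)) * f s :=
    (integral_const_mul _ _).symm
  have hL1 : Integrable (fun s : ℝ =>
      (Complex.I * ((Complex.exp (Complex.I*t*x) - 1)/(Complex.I*t)))
        * (Complex.exp (-(Complex.I * t * s)) * f s))
      (volume.restrict (Set.Ioc (0:ℝ) (2*ℓ))) := hgi.const_mul _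
  have hL2 : Integrable (fun s : ℝ => Complex.exp (Complex.I*t*x)
      * (((Complex.exp (-(Complex.I * t * s)) - 1) / (-(Complex.I * t)))
        * (-Complex.I * f s))) (volume.restrict (Set.Ioc (0:ℝ) (2*ℓ))) := by
    apply Integrable.const_mul
    apply Integrable.bdd_mul (hfi.const_mul _)
      (by apply Measurable.aestronglyMeasurable; fun_prop)
    refine ae_of_all _ fun s => ?_
    apply div_bound hε ?_ (le_of_eq (nexp2 t s))
    rw [norm_neg, hnIt]; exact hΓ t ht
  have hR1 : Integrable (fun s : ℝ =>
      ((Complex.exp (Complex.I * t * x) - 1) / t + t / ((t:ℂ)^2 + 1)) * f s)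
      (volume.restrict (Set.Ioc (0:ℝ) (2*ℓ))) := hfi.const_mul _
  have hR2 : Integrable (fun ξ : ℝ =>
      ((Complex.exp (-(Complex.I * t * ξ)) - 1) / t + t / ((t:ℂ)^2 + 1)) * f ξ)
      (volume.restrict (Set.Ioc (0:ℝ) (2*ℓ))) := by
    apply Integrable.bdd_mul hfi (by apply Measurable.aestronglyMeasurable; fun_prop)
    exact ae_of_all _ fun ξ => hwb t ht ξ
  rw [hA1t, hA2t, hB1t]
  simp only [hδ]
  rw [← integral_sub hL1 hL2, ← integral_sub hR1 hR2]
  refine integral_congr_ae (Filter.Eventually.of_forall fun s => ?_)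
  field_simp
  ring


lemma Shat_congr (ℓ : ℝ) (Γ : Set ℝ) (μ : Measure ℝ) (f f' : ℝ → ℂ)
    (hae : f =ᵐ[volume.restrict (Set.Ioc (0:ℝ) (2*ℓ))] f') :
    Shat ℓ Γ μ f = Shat ℓ Γ μ f' := by
  funext u
  simp only [Shat]
  refine integral_congr_ae (Filter.Eventually.of_forall fun t => ?_)
  beta_reduce
  congr 1
  exact integral_congr_ae (hae.mono fun ξ hξ => by simp only [hξ])

set_option maxHeartbeats 1000000 in
/-- Boundedness of `Ŝ` on `L²`. -/
lemma bound_part (ℓ : ℝ) (hℓ : 0 < ℓ) (μ : Measure ℝ) [IsFiniteMeasure μ] (Γ : Set ℝ)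
    (hΓm : MeasurableSet Γ) (f : ℝ → ℂ)
    (hf : MemLp f 2 (volume.restrict (Set.Ioc (0:ℝ) (2*ℓ)))) :
    MemLp (Shat ℓ Γ μ f) 2 (volume.restrict (Set.Ioc (0:ℝ) (2*ℓ))) ∧
    eLpNorm (Shat ℓ Γ μ f) 2 (volume.restrict (Set.Ioc (0:ℝ) (2*ℓ)))
      ≤ ENNReal.ofReal (2*ℓ*(μ Γ).toReal)
        * eLpNorm f 2 (volume.restrict (Set.Ioc (0:ℝ) (2*ℓ))) := by
  haveI fin1 : IsFiniteMeasure (volume.restrict (Set.Ioc (0:ℝ) (2*ℓ))) := finJ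
  set f' : ℝ → ℂ := hf.1.mk f with hf'def
  have hsm' : StronglyMeasurable f' := hf.1.stronglyMeasurable_mk
  have hae : f =ᵐ[volume.restrict (Set.Ioc (0:ℝ) (2*ℓ))] f' := hf.1.ae_eq_mk
  have hf2' : MemLp f' 2 (volume.restrict (Set.Ioc (0:ℝ) (2*ℓ))) := (memLp_congr_ae hae).1 hf
  have hfi' : Integrable f' (volume.restrict (Set.Ioc (0:ℝ) (2*ℓ))) :=
    hf2'.integrable one_le_two
  have hmf' : Measurable f' := hsm'.measurable
  have hSeq : Shat ℓ Γ μ f = Shat ℓ Γ μ f' := Shat_congr ℓ Γ μ f f' hae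
  set M' : ℝ := ∫ ξ in Set.Ioc (0:ℝ) (2*ℓ), ‖f' ξ‖ with hM'
  have hM'0 : 0 ≤ M' := integral_nonneg fun _ => norm_nonneg _
  have hgb' : ∀ t : ℝ,
      ‖∫ ξ in Set.Ioc (0:ℝ) (2*ℓ), Complex.exp (-(Complex.I * t * ξ)) * f' ξ‖ ≤ M' := by
    intro t
    calc ‖∫ ξ in Set.Ioc (0:ℝ) (2*ℓ), Complex.exp (-(Complex.I * t * ξ)) * f' ξ‖
        ≤ ∫ ξ in Set.Ioc (0:ℝ) (2*ℓ), ‖Complex.exp (-(Complex.I*t*ξ)) * f' ξ‖ :=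
          norm_integral_le_integral_norm _
    _ = M' := by simp only [norm_mul, nexp2, one_mul, hM']
  have hb : ∀ u : ℝ, ‖Shat ℓ Γ μ f' u‖ ≤ M' * (μ Γ).toReal := by
    intro u
    apply norm_setIntegral_le_of_norm_le_const (measure_lt_top μ Γ)
    intro t _
    rw [norm_mul, nexp1, one_mul]
    exact hgb' t
  have hsmS : StronglyMeasurable (Shat ℓ Γ μ f') := by
    have hg'sm : StronglyMeasurable
        (fun t : ℝ => ∫ ξ in Set.Ioc (0:ℝ) (2*ℓ), Complex.exp (-(Complex.I * t * ξ)) * f' ξ) := by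
      have hF : StronglyMeasurable fun p : ℝ × ℝ =>
          Complex.exp (-(Complex.I * p.1 * p.2)) * f' p.2 := by
        apply Measurable.stronglyMeasurable
        fun_prop
      exact hF.integral_prod_right'
    have hF : StronglyMeasurable fun p : ℝ × ℝ =>
        Complex.exp (Complex.I * p.2 * p.1)
          * (∫ ξ in Set.Ioc (0:ℝ) (2*ℓ), Complex.exp (-(Complex.I * p.2 * ξ)) * f' ξ) :=
      ((by fun_prop : Measurable fun p : ℝ × ℝ =>
          Complex.exp (Complex.I * p.2 * p.1)).mul
        (hg'sm.measurable.comp measurable_snd)).stronglyMeasurable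
    exact hF.integral_prod_right'
  have hmemS : MemLp (Shat ℓ Γ μ f') 2 (volume.restrict (Set.Ioc (0:ℝ) (2*ℓ))) :=
    MemLp.of_bound hsmS.aestronglyMeasurable _ (ae_of_all _ hb)
  have hvol : (volume.restrict (Set.Ioc (0:ℝ) (2*ℓ))) Set.univ = ENNReal.ofReal (2*ℓ) := by
    simp [Measure.restrict_apply_univ, Real.volume_Ioc]
  refine ⟨by rw [hSeq]; exact hmemS, ?_⟩
  have hM'le : ENNReal.ofReal M' ≤ eLpNorm f' 1 (volume.restrict (Set.Ioc (0:ℝ) (2*ℓ))) := by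
    rw [hM', integral_norm_eq_lintegral_enorm hf2'.1, eLpNorm_one_eq_lintegral_enorm]
    exact ENNReal.ofReal_toReal_le
  have h12 : eLpNorm f' 1 (volume.restrict (Set.Ioc (0:ℝ) (2*ℓ)))
      ≤ eLpNorm f' 2 (volume.restrict (Set.Ioc (0:ℝ) (2*ℓ))) * ENNReal.ofReal (2*ℓ) ^ (2⁻¹:ℝ) := by
    have := eLpNorm_le_eLpNorm_mul_rpow_measure_univ (p := 1) (q := 2)
      (by norm_num) hf2'.1
    rw [hvol] at this
    convert this using 3
    norm_num
  have hpow : ENNReal.ofReal (2*ℓ) ^ (2⁻¹:ℝ) * ENNReal.ofReal (2*ℓ) ^ (2⁻¹:ℝ)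
      = ENNReal.ofReal (2*ℓ) := by
    rw [← ENNReal.rpow_add _ _ (by simp [ENNReal.ofReal_eq_zero]; linarith) ENNReal.ofReal_ne_top]
    norm_num
  calc eLpNorm (Shat ℓ Γ μ f) 2 (volume.restrict (Set.Ioc (0:ℝ) (2*ℓ)))
      = eLpNorm (Shat ℓ Γ μ f') 2 (volume.restrict (Set.Ioc (0:ℝ) (2*ℓ))) := by rw [hSeq]
  _ ≤ (volume.restrict (Set.Ioc (0:ℝ) (2*ℓ))) (Set.univ : Set ℝ) ^ (2:ENNReal).toReal⁻¹
        * ENNReal.ofReal (M' * (μ Γ).toReal) := eLpNorm_le_of_ae_bound (ae_of_all _ hb)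
  _ = ENNReal.ofReal (2*ℓ) ^ (2⁻¹:ℝ) * (ENNReal.ofReal M' * μ Γ) := by
      rw [hvol, ENNReal.ofReal_mul hM'0, ENNReal.ofReal_toReal (measure_ne_top μ Γ)]
      norm_num
  _ ≤ ENNReal.ofReal (2*ℓ) ^ (2⁻¹:ℝ)
        * ((eLpNorm f' 2 (volume.restrict (Set.Ioc (0:ℝ) (2*ℓ)))
            * ENNReal.ofReal (2*ℓ) ^ (2⁻¹:ℝ)) * μ Γ) := by
      exact mul_le_mul_right (mul_le_mul_left (hM'le.trans h12) _) _
  _ = ENNReal.ofReal (2*ℓ*(μ Γ).toReal)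
        * eLpNorm f 2 (volume.restrict (Set.Ioc (0:ℝ) (2*ℓ))) := by
      have hsplit : ENNReal.ofReal (2*ℓ*(μ Γ).toReal) = ENNReal.ofReal (2*ℓ) * μ Γ := by
        rw [ENNReal.ofReal_mul (by positivity : (0:ℝ) ≤ 2*ℓ),
          ENNReal.ofReal_toReal (measure_ne_top μ Γ)]
      rw [eLpNorm_congr_ae hae, hsplit]
      calc ENNReal.ofReal (2*ℓ) ^ (2⁻¹:ℝ)
            * ((eLpNorm f' 2 (volume.restrict (Set.Ioc (0:ℝ) (2*ℓ)))
                * ENNReal.ofReal (2*ℓ) ^ (2⁻¹:ℝ)) * μ Γ)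
          = (ENNReal.ofReal (2*ℓ) ^ (2⁻¹:ℝ) * ENNReal.ofReal (2*ℓ) ^ (2⁻¹:ℝ))
              * (μ Γ * eLpNorm f' 2 (volume.restrict (Set.Ioc (0:ℝ) (2*ℓ)))) := by ring
      _ = ENNReal.ofReal (2*ℓ) * μ Γ
            * eLpNorm f' 2 (volume.restrict (Set.Ioc (0:ℝ) (2*ℓ))) := by rw [hpow]; ring

end TruncAux

set_option maxHeartbeats 1000000 in
/-- **The truncated operator identity (C8) of the paper** (scalar case `p = 1`).
For `Γ = (-T₁,-ε) ∪ (ε,T₂)` and a finite positive Borel measure `μ`, the operator `Ŝ`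
is bounded on `L²((0,2ℓ);ℂ)` and satisfies
`AŜ - ŜA* = i(Φ̂₁Φ₂* + Φ₂Φ̂₁*)`, i.e. for every `f ∈ L²((0,2ℓ);ℂ)` and a.e.
`x ∈ (0,2ℓ)`:
`(AŜf)(x) - (ŜA*f)(x) = i(Φ̂₁(x)∫₀^{2ℓ}f + ∫₀^{2ℓ} conj(Φ̂₁(ξ))f(ξ)dξ)`. -/
theorem truncated_operator_identity
    (ℓ ε T₁ T₂ : ℝ) (hℓ : 0 < ℓ) (hε : 0 < ε) (hT₁ : ε < T₁) (hT₂ : ε < T₂)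
    (μ : MeasureTheory.Measure ℝ) [IsFiniteMeasure μ]
    (Γ : Set ℝ) (hΓ : Γ = Set.Ioo (-T₁) (-ε) ∪ Set.Ioo ε T₂) :
    -- Ŝ is a bounded operator on L²((0,2ℓ);ℂ)
    (∃ C : ℝ, ∀ f : ℝ → ℂ, MemLp f 2 (volume.restrict (Set.Ioc (0:ℝ) (2*ℓ))) →
      MemLp (Shat ℓ Γ μ f) 2 (volume.restrict (Set.Ioc (0:ℝ) (2*ℓ))) ∧
      eLpNorm (Shat ℓ Γ μ f) 2 (volume.restrict (Set.Ioc (0:ℝ) (2*ℓ)))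
        ≤ ENNReal.ofReal C * eLpNorm f 2 (volume.restrict (Set.Ioc (0:ℝ) (2*ℓ)))) ∧
    -- the identity AŜ - ŜA* = i(Φ̂₁Φ₂* + Φ₂Φ̂₁*)
    (∀ f : ℝ → ℂ, MemLp f 2 (volume.restrict (Set.Ioc (0:ℝ) (2*ℓ))) →
      ∀ᵐ x ∂(volume.restrict (Set.Ioc (0:ℝ) (2*ℓ))),
        Complex.I * (∫ t in Set.Ioc (0:ℝ) x, Shat ℓ Γ μ f t)
            - Shat ℓ Γ μ (fun t => -Complex.I * ∫ s in Set.Ioc t (2*ℓ), f s) x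
          = Complex.I * (Phihat Γ μ x * (∫ ξ in Set.Ioc (0:ℝ) (2*ℓ), f ξ)
              + ∫ ξ in Set.Ioc (0:ℝ) (2*ℓ), (starRingEnd ℂ) (Phihat Γ μ ξ) * f ξ)) := by
  have hΓm : MeasurableSet Γ := by
    rw [hΓ]; exact measurableSet_Ioo.union measurableSet_Ioo
  have hΓε : ∀ t ∈ Γ, ε ≤ |t| := by
    intro t ht
    rw [hΓ] at ht
    rcases ht with h | h
    · rw [abs_of_neg (by linarith [h.2] : t < 0)]; linarith [h.2]
    · rw [abs_of_pos (by linarith [h.1] : 0 < t)]; linarith [h.1]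
  constructor
  · exact ⟨2*ℓ*(μ Γ).toReal, fun f hf => TruncAux.bound_part ℓ hℓ μ Γ hΓm f hf⟩
  · intro f hf
    haveI fin1 : IsFiniteMeasure (volume.restrict (Set.Ioc (0:ℝ) (2*ℓ))) := TruncAux.finJ
    set f' : ℝ → ℂ := hf.1.mk f with hf'def
    have hsm' : StronglyMeasurable f' := hf.1.stronglyMeasurable_mk
    have hae : f =ᵐ[volume.restrict (Set.Ioc (0:ℝ) (2*ℓ))] f' := hf.1.ae_eq_mk
    have hf2' : MemLp f' 2 (volume.restrict (Set.Ioc (0:ℝ) (2*ℓ))) := (memLp_congr_ae hae).1 hf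
    have hfi' : Integrable f' (volume.restrict (Set.Ioc (0:ℝ) (2*ℓ))) :=
      hf2'.integrable one_le_two
    have hSeq : Shat ℓ Γ μ f = Shat ℓ Γ μ f' := TruncAux.Shat_congr ℓ Γ μ f f' hae
    have hTeq : ∀ x : ℝ,
        Shat ℓ Γ μ (fun t => -Complex.I * ∫ s in Set.Ioc t (2*ℓ), f s) x
          = Shat ℓ Γ μ (fun t => -Complex.I * ∫ s in Set.Ioc t (2*ℓ), f' s) x := by
      intro x
      simp only [Shat]
      refine integral_congr_ae (Filter.Eventually.of_forall fun t => ?_)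
      beta_reduce
      congr 1
      refine setIntegral_congr_fun measurableSet_Ioc fun ξ hξ => ?_
      beta_reduce
      congr 2
      exact integral_congr_ae
        (ae_restrict_of_ae_restrict_of_subset (Set.Ioc_subset_Ioc_left hξ.1.le) hae)
    have hFeq : (∫ ξ in Set.Ioc (0:ℝ) (2*ℓ), f ξ) = ∫ ξ in Set.Ioc (0:ℝ) (2*ℓ), f' ξ :=
      integral_congr_ae hae
    have hCeq : (∫ ξ in Set.Ioc (0:ℝ) (2*ℓ), (starRingEnd ℂ) (Phihat Γ μ ξ) * f ξ)
        = ∫ ξ in Set.Ioc (0:ℝ) (2*ℓ), (starRingEnd ℂ) (Phihat Γ μ ξ) * f' ξ :=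
      integral_congr_ae (hae.mono fun ξ h => by simp only [h])
    filter_upwards [ae_restrict_mem measurableSet_Ioc] with x hx
    rw [hSeq, hTeq x, hFeq, hCeq]
    exact TruncAux.key ℓ ε hℓ hε μ Γ hΓm hΓε f' hsm' hfi' hx

end
end

section
/- Let μ be a positive Borel measure on ℝ, let ℓ > 0 and M ≥ 0, and suppose that for every f ∈ L²((0,2ℓ); ℂ): ∫_ℝ | ∫₀^{2ℓ} e^{−iηt} f(η) dη |² dμ(t) ≤ M ∫₀^{2ℓ} |f(η)|² dη. Then for every k ∈ ℕ and every f ∈ L²((0,2kℓ); ℂ): ∫_ℝ | ∫₀^{2kℓ} e^{−iηt} f(η) dη |² dμ(t) ≤ k² M ∫₀^{2kℓ} |f(η)|² dη. -/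
open MeasureTheory Set

lemma BLI_norm_exp (a b : ℝ) : ‖Complex.exp (-(Complex.I * (a:ℂ) * (b:ℂ)))‖ = 1 := by
  have h1 : -(Complex.I * (a:ℂ) * b) = ((-(a*b):ℝ):ℂ) * Complex.I := by push_cast; ring
  rw [h1, Complex.norm_exp_ofReal_mul_I]

lemma BLI_nnnorm_exp (a b : ℝ) : ‖Complex.exp (-(Complex.I * (a:ℂ) * (b:ℂ)))‖₊ = 1 :=
  NNReal.coe_injective (by simp [BLI_norm_exp a b])

lemma BLI_lintegral_split (g : ℝ → ENNReal) (ℓ : ℝ) (hℓ : 0 < ℓ) (k : ℕ) :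
    ∫⁻ η in Ioc (0:ℝ) (2*k*ℓ), g η
      = ∑ j ∈ Finset.range k, ∫⁻ η in Ioc (2*j*ℓ) (2*j*ℓ + 2*ℓ), g η := by
  induction k with
  | zero => simp
  | succ n ih =>
    rw [Finset.sum_range_succ, ← ih,
      ← lintegral_union measurableSet_Ioc (Ioc_disjoint_Ioc_of_le le_rfl),
      Ioc_union_Ioc_eq_Ioc (by positivity) (by nlinarith),
      show 2*(n:ℝ)*ℓ + 2*ℓ = 2*((n+1 : ℕ):ℝ)*ℓ by push_cast; ring]

lemma BLI_integral_split (g : ℝ → ℂ) (ℓ : ℝ) (hℓ : 0 < ℓ) (k : ℕ)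
    (hg : IntegrableOn g (Ioc (0:ℝ) (2*k*ℓ))) :
    ∫ η in Ioc (0:ℝ) (2*k*ℓ), g η
      = ∑ j ∈ Finset.range k, ∫ η in Ioc (2*j*ℓ) (2*j*ℓ + 2*ℓ), g η := by
  induction k with
  | zero => simp
  | succ n ih =>
    have hsub1 : Ioc (0:ℝ) (2*n*ℓ) ⊆ Ioc (0:ℝ) (2*(n+1:ℕ)*ℓ) :=
      Ioc_subset_Ioc le_rfl (by push_cast; nlinarith)
    have hsub2 : Ioc (2*(n:ℝ)*ℓ) (2*n*ℓ + 2*ℓ) ⊆ Ioc (0:ℝ) (2*(n+1:ℕ)*ℓ) :=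
      Ioc_subset_Ioc (by positivity) (by push_cast; nlinarith)
    have he : Ioc (0:ℝ) (2*(n+1:ℕ)*ℓ) = Ioc (0:ℝ) (2*n*ℓ) ∪ Ioc (2*n*ℓ) (2*n*ℓ + 2*ℓ) := by
      rw [Ioc_union_Ioc_eq_Ioc (by positivity) (by nlinarith),
        show 2*(n:ℝ)*ℓ + 2*ℓ = 2*((n+1 : ℕ):ℝ)*ℓ by push_cast; ring]
    rw [he, setIntegral_union (Ioc_disjoint_Ioc_of_le le_rfl) measurableSet_Ioc
        (hg.mono_set hsub1) (hg.mono_set hsub2),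
      ih (hg.mono_set hsub1), Finset.sum_range_succ]

lemma BLI_cs (k : ℕ) (x : ℕ → ℂ) :
    ((‖∑ j ∈ Finset.range k, x j‖₊ : ENNReal))^2
      ≤ (k : ENNReal) * ∑ j ∈ Finset.range k, ((‖x j‖₊ : ENNReal))^2 := by
  have h1 : ‖∑ j ∈ Finset.range k, x j‖ ≤ ∑ j ∈ Finset.range k, ‖x j‖ :=
    norm_sum_le _ _
  have h2 : (∑ j ∈ Finset.range k, ‖x j‖)^2 ≤ (k:ℝ) * ∑ j ∈ Finset.range k, ‖x j‖^2 := by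
    simpa using sq_sum_le_card_mul_sum_sq (s := Finset.range k) (f := fun j => ‖x j‖)
  calc ((‖∑ j ∈ Finset.range k, x j‖₊ : ENNReal))^2
      = ENNReal.ofReal (‖∑ j ∈ Finset.range k, x j‖^2) := by
        rw [ENNReal.ofReal_pow (norm_nonneg _), ofReal_norm, enorm_eq_nnnorm]
    _ ≤ ENNReal.ofReal ((k:ℝ) * ∑ j ∈ Finset.range k, ‖x j‖^2) :=
        ENNReal.ofReal_le_ofReal
          (le_trans (pow_le_pow_left₀ (norm_nonneg _) h1 2) h2)
    _ = (k : ENNReal) * ∑ j ∈ Finset.range k, ((‖x j‖₊ : ENNReal))^2 := by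
        rw [ENNReal.ofReal_mul (by positivity), ENNReal.ofReal_natCast,
          ENNReal.ofReal_sum_of_nonneg (fun j _ => by positivity)]
        congr 1
        refine Finset.sum_congr rfl fun j _ => ?_
        rw [ENNReal.ofReal_pow (norm_nonneg _), ofReal_norm, enorm_eq_nnnorm]

/-- **Remark 5.9 of the paper.**  If the quadratic form
`∫_ℝ |∫₀^{2ℓ} e^{-iηt} f(η) dη|² dμ(t)` is bounded by `M‖f‖²` on `L²((0,2ℓ);ℂ)`,
then for every `k ∈ ℕ` the analogous form on `L²((0,2kℓ);ℂ)` is bounded by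
`k²M‖f‖²`. -/
theorem boundedness_on_longer_intervals
    (μ : Measure ℝ) (ℓ M : ℝ) (hℓ : 0 < ℓ) (hM : 0 ≤ M)
    (h : ∀ f : ℝ → ℂ, MemLp f 2 (volume.restrict (Set.Ioc (0:ℝ) (2*ℓ))) →
      ∫⁻ t, (‖∫ η in Set.Ioc (0:ℝ) (2*ℓ), Complex.exp (-(Complex.I * η * t)) * f η‖₊ ^ 2
          : ENNReal) ∂μ
        ≤ ENNReal.ofReal M
          * ∫⁻ η in Set.Ioc (0:ℝ) (2*ℓ), (‖f η‖₊ ^ 2 : ENNReal)) :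
    ∀ k : ℕ, ∀ f : ℝ → ℂ,
      MemLp f 2 (volume.restrict (Set.Ioc (0:ℝ) (2*k*ℓ))) →
      ∫⁻ t, (‖∫ η in Set.Ioc (0:ℝ) (2*k*ℓ), Complex.exp (-(Complex.I * η * t)) * f η‖₊ ^ 2
          : ENNReal) ∂μ
        ≤ ENNReal.ofReal ((k:ℝ)^2 * M)
          * ∫⁻ η in Set.Ioc (0:ℝ) (2*k*ℓ), (‖f η‖₊ ^ 2 : ENNReal) := by
  intro k f hf
  -- the translated functions
  set g : ℕ → ℝ → ℂ := fun j η => f (η + 2*j*ℓ) with hg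
  -- the partial Fourier transforms of the translates
  set A : ℕ → ℝ → ℂ := fun j t =>
    ∫ η in Set.Ioc (0:ℝ) (2*ℓ), Complex.exp (-(Complex.I * η * t)) * g j η with hA
  -- Memℒp of translates
  have hmem : ∀ j ∈ Finset.range k, MemLp (g j) 2 (volume.restrict (Set.Ioc (0:ℝ) (2*ℓ))) := by
    intro j hj
    rw [Finset.mem_range] at hj
    have hjk : (j:ℝ) + 1 ≤ (k:ℝ) := by exact_mod_cast hj
    have hsub : Ioc (2*(j:ℝ)*ℓ) (2*j*ℓ + 2*ℓ) ⊆ Ioc (0:ℝ) (2*k*ℓ) :=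
      Ioc_subset_Ioc (by positivity) (by nlinarith)
    have h1 : MemLp f 2 (volume.restrict (Ioc (2*(j:ℝ)*ℓ) (2*j*ℓ + 2*ℓ))) :=
      hf.mono_measure (Measure.restrict_mono hsub le_rfl)
    have hmp : MeasurePreserving (fun x : ℝ => x + 2*j*ℓ)
        (volume.restrict (Ioc (0:ℝ) (2*ℓ)))
        (volume.restrict (Ioc (2*(j:ℝ)*ℓ) (2*j*ℓ + 2*ℓ))) := by
      have h0 := (measurePreserving_add_right volume (2*(j:ℝ)*ℓ)).restrict_preimage
        (measurableSet_Ioc (a := 2*(j:ℝ)*ℓ) (b := 2*j*ℓ + 2*ℓ))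
      have hpre : (fun x : ℝ => x + 2*j*ℓ) ⁻¹' Ioc (2*(j:ℝ)*ℓ) (2*j*ℓ + 2*ℓ)
          = Ioc (0:ℝ) (2*ℓ) := by
        rw [preimage_add_const_Ioc]
        rw [show 2*(j:ℝ)*ℓ - 2*j*ℓ = 0 by ring, show 2*(j:ℝ)*ℓ + 2*ℓ - 2*j*ℓ = 2*ℓ by ring]
      rwa [hpre] at h0
    simpa [hg, Function.comp_def] using h1.comp_measurePreserving hmp
  -- continuity of the exponential factor
  have hcont : ∀ t : ℝ, Continuous fun η : ℝ => Complex.exp (-(Complex.I * η * t)) := by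
    intro t; fun_prop
  have hcont' : ∀ η : ℝ, Continuous fun t : ℝ => Complex.exp (-(Complex.I * η * t)) := by
    intro η; fun_prop
  -- integrability of f on the long interval
  have hfi : IntegrableOn f (Ioc (0:ℝ) (2*k*ℓ)) volume := hf.integrable one_le_two
  -- pointwise decomposition of the big Fourier integral
  have hdecomp : ∀ t : ℝ,
      (‖∫ η in Set.Ioc (0:ℝ) (2*k*ℓ), Complex.exp (-(Complex.I * η * t)) * f η‖₊ ^ 2
          : ENNReal)
        ≤ (k : ENNReal) * ∑ j ∈ Finset.range k, ((‖A j t‖₊ : ENNReal))^2 := by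
    intro t
    have hint : IntegrableOn (fun η : ℝ => Complex.exp (-(Complex.I * η * t)) * f η)
        (Ioc (0:ℝ) (2*k*ℓ)) volume :=
      hfi.bdd_mul ((hcont t).aestronglyMeasurable)
        (ae_of_all _ fun x => le_of_eq (BLI_norm_exp x t))
    have hsplit := BLI_integral_split (fun η => Complex.exp (-(Complex.I * η * t)) * f η)
      ℓ hℓ k hint
    have hpiece : ∀ j ∈ Finset.range k,
        ∫ η in Ioc (2*(j:ℝ)*ℓ) (2*j*ℓ + 2*ℓ), Complex.exp (-(Complex.I * η * t)) * f η
          = Complex.exp (-(Complex.I * ((2*(j:ℝ)*ℓ : ℝ):ℂ) * t)) * A j t := by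
      intro j _
      have hle1 : (2*(j:ℝ)*ℓ) ≤ 2*j*ℓ + 2*ℓ := by nlinarith
      have hle2 : (0:ℝ) ≤ 2*ℓ := by positivity
      have hc := intervalIntegral.integral_comp_add_right (a := 0) (b := 2*ℓ)
        (fun η => Complex.exp (-(Complex.I * η * t)) * f η) (2*(j:ℝ)*ℓ)
      rw [show (0:ℝ) + 2*(j:ℝ)*ℓ = 2*(j:ℝ)*ℓ by ring,
        show 2*ℓ + 2*(j:ℝ)*ℓ = 2*(j:ℝ)*ℓ + 2*ℓ by ring] at hc
      rw [← intervalIntegral.integral_of_le hle1, ← hc]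
      calc (∫ x in (0:ℝ)..(2*ℓ),
            Complex.exp (-(Complex.I * ((x + 2*(j:ℝ)*ℓ : ℝ):ℂ) * t)) * f (x + 2*(j:ℝ)*ℓ))
          = ∫ x in (0:ℝ)..(2*ℓ), Complex.exp (-(Complex.I * ((2*(j:ℝ)*ℓ : ℝ):ℂ) * t))
              * (Complex.exp (-(Complex.I * x * t)) * g j x) := by
            refine intervalIntegral.integral_congr fun x _ => ?_
            have harg : -(Complex.I * ((x + 2*(j:ℝ)*ℓ : ℝ):ℂ) * (t:ℂ))
                = -(Complex.I * ((2*(j:ℝ)*ℓ : ℝ):ℂ) * t) + -(Complex.I * (x:ℂ) * t) := by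
              push_cast; ring
            rw [harg, Complex.exp_add, mul_assoc]
        _ = Complex.exp (-(Complex.I * ((2*(j:ℝ)*ℓ : ℝ):ℂ) * t)) * A j t := by
            rw [intervalIntegral.integral_const_mul, hA,
              intervalIntegral.integral_of_le hle2]
    rw [hsplit, Finset.sum_congr rfl hpiece]
    refine le_trans (BLI_cs k fun j =>
      Complex.exp (-(Complex.I * ((2*(j:ℝ)*ℓ : ℝ):ℂ) * t)) * A j t) (le_of_eq ?_)
    congr 1
    refine Finset.sum_congr rfl fun j _ => ?_
    congr 1
    rw [nnnorm_mul, BLI_nnnorm_exp (2*(j:ℝ)*ℓ) t, one_mul]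
  -- continuity (hence measurability) of each A j
  have hAcont : ∀ j ∈ Finset.range k, Continuous (A j) := by
    intro j hj
    refine continuous_of_dominated (μ := volume.restrict (Ioc (0:ℝ) (2*ℓ)))
      (bound := fun η => ‖g j η‖) ?_ ?_ ?_ ?_
    · intro t
      exact ((hcont t).aestronglyMeasurable).mul (hmem j hj).aestronglyMeasurable
    · intro t
      filter_upwards with η
      rw [norm_mul, BLI_norm_exp η t, one_mul]
    · exact ((hmem j hj).integrable one_le_two).norm
    · filter_upwards with η
      exact (hcont' η).mul continuous_const
  -- main estimate
  calc ∫⁻ t, (‖∫ η in Set.Ioc (0:ℝ) (2*k*ℓ),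
        Complex.exp (-(Complex.I * η * t)) * f η‖₊ ^ 2 : ENNReal) ∂μ
      ≤ ∫⁻ t, (k : ENNReal) * ∑ j ∈ Finset.range k, ((‖A j t‖₊ : ENNReal))^2 ∂μ :=
        lintegral_mono hdecomp
    _ = (k : ENNReal) * ∑ j ∈ Finset.range k, ∫⁻ t, ((‖A j t‖₊ : ENNReal))^2 ∂μ := by
        rw [lintegral_const_mul' _ _ (ENNReal.natCast_ne_top k),
          lintegral_finset_sum _ (fun j hj =>
            (((hAcont j hj).measurable.nnnorm.coe_nnreal_ennreal).pow_const 2))]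
    _ ≤ (k : ENNReal) * ∑ j ∈ Finset.range k,
          (ENNReal.ofReal M * ∫⁻ η in Set.Ioc (0:ℝ) (2*ℓ), (‖g j η‖₊ ^ 2 : ENNReal)) := by
        gcongr with j hj
        exact h (g j) (hmem j hj)
    _ = (k : ENNReal) * (ENNReal.ofReal M
          * ∫⁻ η in Set.Ioc (0:ℝ) (2*k*ℓ), (‖f η‖₊ ^ 2 : ENNReal)) := by
        rw [← Finset.mul_sum]
        congr 1
        congr 1
        rw [BLI_lintegral_split (fun η => (‖f η‖₊ ^ 2 : ENNReal)) ℓ hℓ k]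
        refine Finset.sum_congr rfl fun j _ => ?_
        have hemb : MeasurableEmbedding (fun x : ℝ => x + 2*(j:ℝ)*ℓ) :=
          (MeasurableEquiv.addRight (2*(j:ℝ)*ℓ)).measurableEmbedding
        have h0 := (measurePreserving_add_right volume (2*(j:ℝ)*ℓ)).setLIntegral_comp_preimage_emb
          hemb (fun η => (‖f η‖₊ ^ 2 : ENNReal)) (Ioc (2*(j:ℝ)*ℓ) (2*j*ℓ + 2*ℓ))
        have hpre : (fun x : ℝ => x + 2*j*ℓ) ⁻¹' Ioc (2*(j:ℝ)*ℓ) (2*j*ℓ + 2*ℓ)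
            = Ioc (0:ℝ) (2*ℓ) := by
          rw [preimage_add_const_Ioc]
          rw [show 2*(j:ℝ)*ℓ - 2*j*ℓ = 0 by ring, show 2*(j:ℝ)*ℓ + 2*ℓ - 2*j*ℓ = 2*ℓ by ring]
        rw [hpre] at h0
        exact h0
    _ ≤ ENNReal.ofReal ((k:ℝ)^2 * M)
          * ∫⁻ η in Set.Ioc (0:ℝ) (2*k*ℓ), (‖f η‖₊ ^ 2 : ENNReal) := by
        rw [← mul_assoc]
        gcongr
        rw [show (k : ENNReal) * ENNReal.ofReal M = ENNReal.ofReal ((k:ℝ) * M) by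
          rw [ENNReal.ofReal_mul (by positivity), ENNReal.ofReal_natCast]]
        refine ENNReal.ofReal_le_ofReal ?_
        have hkk : (k:ℝ) ≤ (k:ℝ)^2 := by
          exact_mod_cast Nat.le_self_pow two_ne_zero k
        nlinarith
end

section
/- Let p ∈ ℕ, J = [[0, I_p],[I_p, 0]], and let γ = [γ₁ γ₂] ∈ ℂ^{p×2p} (γ₁, γ₂ the p×p blocks) satisfy γ J γ* = c I_p, i.e., γ₁γ₂* + γ₂γ₁* = c I_p, for some real c ≠ 0. Then both γ₁ and γ₂ are invertible. -/
open Matrix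

lemma aux_isUnit {p : ℕ} {c : ℂ} (hc : c ≠ 0)
    (A B : Matrix (Fin p) (Fin p) ℂ)
    (h : A * Bᴴ + B * Aᴴ = c • 1) : IsUnit A := by
  rw [Matrix.isUnit_iff_isUnit_det, isUnit_iff_ne_zero]
  intro hdet
  have hdetH : Aᴴ.det = 0 := by
    rw [Matrix.det_conjTranspose, hdet, star_zero]
  obtain ⟨w, hw0, hw⟩ := (Matrix.exists_mulVec_eq_zero_iff).2 hdetH
  have key : star w ⬝ᵥ ((A * Bᴴ + B * Aᴴ) *ᵥ w) = 0 := by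
    rw [Matrix.add_mulVec, dotProduct_add, ← Matrix.mulVec_mulVec,
      ← Matrix.mulVec_mulVec, hw, Matrix.mulVec_zero, dotProduct_zero,
      Matrix.dotProduct_mulVec]
    have hA : star w ᵥ* A = 0 := by
      have := congrArg star (Matrix.star_mulVec (M := Aᴴ) (v := w))
      simp only [Matrix.conjTranspose_conjTranspose, star_star] at this
      rw [hw] at this
      have h0 := congrArg star this
      simpa using h0.symm
    rw [hA, zero_dotProduct, add_zero]
  rw [h, Matrix.smul_mulVec, Matrix.one_mulVec, dotProduct_smul,
    smul_eq_mul] at key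
  rcases mul_eq_zero.1 key with h1 | h2
  · exact hc h1
  · apply hw0
    funext i
    have h3 : ((∑ j, Complex.normSq (w j) : ℝ) : ℂ) = 0 := by
      rw [← h2]
      push_cast
      simp [dotProduct, Complex.normSq_eq_conj_mul_self]
    have h4 : ∑ j, Complex.normSq (w j) = 0 := by exact_mod_cast h3
    have h5 := (Finset.sum_eq_zero_iff_of_nonneg
      (fun j _ => Complex.normSq_nonneg _)).1 h4 i (Finset.mem_univ i)
    simpa using Complex.normSq_eq_zero.1 h5

/-- **Nondegeneracy of the blocks** (used before (A2) and in the proof of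
Proposition A.4 of the paper).  If `γ = [γ₁ γ₂]` satisfies
`γ J γ* = γ₁γ₂* + γ₂γ₁* = c I_p` for some real `c ≠ 0`, then `γ₁` and `γ₂` are
invertible. -/
theorem blocks_invertible_of_gammaJgamma
    (p : ℕ) (c : ℝ) (hc : c ≠ 0)
    (J : Matrix (Fin p ⊕ Fin p) (Fin p ⊕ Fin p) ℂ)
    (hJ : J = Matrix.fromBlocks 0 1 1 0)
    (γ : Matrix (Fin p) (Fin p ⊕ Fin p) ℂ)
    (γ₁ γ₂ : Matrix (Fin p) (Fin p) ℂ)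
    (hγ₁ : γ₁ = γ.submatrix id Sum.inl)
    (hγ₂ : γ₂ = γ.submatrix id Sum.inr)
    (h : γ * J * γᴴ = (c : ℂ) • 1)
    (h' : γ₁ * γ₂ᴴ + γ₂ * γ₁ᴴ = (c : ℂ) • 1) :
    IsUnit γ₁ ∧ IsUnit γ₂ := by
  have hcC : (c : ℂ) ≠ 0 := by exact_mod_cast hc
  refine ⟨aux_isUnit hcC γ₁ γ₂ h', aux_isUnit hcC γ₂ γ₁ ?_⟩
  rw [add_comm]; exact h'
end

section
/- Let p ∈ ℕ, ℓ > 0, J = [[0, I_p],[I_p, 0]]. Let β = [β₁ β₂] : [0,2ℓ] → ℂ^{p×2p} be differentiable with β(0) = (1/√2)[I_p I_p] and β′(x) J β(x)* = 0 for all x (hence β(x)Jβ(x)* ≡ I_p and β₁(x), β₂(x) are invertible for all x). Set H(x) = β(x)*β(x), β̃(x) = [0 I_p] H(x) = β₂(x)*β(x), let β̃₂(x) = β₂(x)*β₂(x) be the second p×p block of β̃(x), and set θ(x) = (β₂(x)*)^{-1}. Then β(x) = θ(x) β̃(x) for all x, θ(0) = √2·I_p, and θ satisfies the differential equation θ′(x)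 + θ(x)·( β̃′(x) J β̃(x)* β̃₂(x)^{-1} ) = 0 on [0,2ℓ]. -/
open Matrix

/-- Entrywise derivative of a product of matrix-valued functions. -/
private lemma hasDerivWithinAt_matrix_mul {m n k : Type*} [Fintype n]
    {f : ℝ → Matrix m n ℂ} {F : Matrix m n ℂ} {g : ℝ → Matrix n k ℂ} {G : Matrix n k ℂ}
    {s : Set ℝ} {x : ℝ}
    (hf : ∀ i j, HasDerivWithinAt (fun y => f y i j) (F i j) s x)
    (hg : ∀ i j, HasDerivWithinAt (fun y => g y i j) (G i j) s x)
    (i : m) (j : k) :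
    HasDerivWithinAt (fun y => (f y * g y) i j) ((F * g x + f x * G) i j) s x := by
  simp only [Matrix.mul_apply, Matrix.add_apply]
  rw [← Finset.sum_add_distrib]
  exact HasDerivWithinAt.fun_sum fun c _ => (hf i c).mul (hg c j)

open scoped ComplexOrder in
/-- If `A * Cᴴ + C * Aᴴ = 1` then `C` is invertible. -/
private lemma isUnit_of_add_conjTranspose {p : ℕ}
    (A C : Matrix (Fin p) (Fin p) ℂ) (h : A * Cᴴ + C * Aᴴ = 1) : IsUnit C := by
  rw [Matrix.isUnit_iff_isUnit_det, isUnit_iff_ne_zero]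
  intro hC
  have hdet : (Cᴴ).det = 0 := by rw [Matrix.det_conjTranspose, hC, star_zero]
  obtain ⟨v, hv0, hv⟩ := (Matrix.exists_mulVec_eq_zero_iff).2 hdet
  have hkey := congrArg (fun M => dotProduct (star v) (M *ᵥ v)) h
  simp only [Matrix.add_mulVec, Matrix.one_mulVec] at hkey
  have h1 : (A * Cᴴ) *ᵥ v = 0 := by
    rw [← Matrix.mulVec_mulVec, hv, Matrix.mulVec_zero]
  have hvC : star v ᵥ* C = 0 := by
    have := Matrix.star_mulVec (M := Cᴴ) (v := v)
    rw [hv, star_zero, Matrix.conjTranspose_conjTranspose] at this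
    exact this.symm
  have h2 : dotProduct (star v) ((C * Aᴴ) *ᵥ v) = 0 := by
    rw [← Matrix.mulVec_mulVec, Matrix.dotProduct_mulVec, hvC, zero_dotProduct]
  rw [dotProduct_add, h1, dotProduct_zero, zero_add, h2] at hkey
  exact hv0 (dotProduct_star_self_eq_zero.mp hkey.symm)

/-- **Proposition A.1 of the paper.**  Let `β = [β₁ β₂]` be differentiable on `[0,2ℓ]`
with `β(0) = (1/√2)[I_p I_p]` and `β′Jβ* ≡ 0` (hence `βJβ* ≡ I_p` and `β₁, β₂`
invertible).  With `H = β*β`, `β̃ = [0 I_p]H`, `β̃₂` the second block of `β̃` and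
`θ = (β₂*)⁻¹`, one has `β = θβ̃`, `θ(0) = √2·I_p`, and `θ` solves the differential
equation `θ′ + θ(β̃′Jβ̃*β̃₂⁻¹) = 0` on `[0,2ℓ]`. -/
theorem recover_beta_from_Hamiltonian
    (p : ℕ) (ℓ : ℝ) (hℓ : 0 < ℓ)
    (J : Matrix (Fin p ⊕ Fin p) (Fin p ⊕ Fin p) ℂ)
    (hJ : J = Matrix.fromBlocks 0 1 1 0)
    (β β' : ℝ → Matrix (Fin p) (Fin p ⊕ Fin p) ℂ)
    (hβdiff : ∀ x ∈ Set.Icc (0:ℝ) (2*ℓ), ∀ i k,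
      HasDerivWithinAt (fun y => β y i k) (β' x i k) (Set.Icc (0:ℝ) (2*ℓ)) x)
    (hβ0 : β 0 = (((Real.sqrt 2 : ℝ) : ℂ))⁻¹ • Matrix.fromCols 1 1)
    (hβJ : ∀ x ∈ Set.Icc (0:ℝ) (2*ℓ), β' x * J * (β x)ᴴ = 0)
    (H : ℝ → Matrix (Fin p ⊕ Fin p) (Fin p ⊕ Fin p) ℂ)
    (hH : ∀ x, H x = (β x)ᴴ * β x)
    (βt : ℝ → Matrix (Fin p) (Fin p ⊕ Fin p) ℂ)
    (hβt : ∀ x, βt x = (H x).submatrix Sum.inr id)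
    (βt₂ : ℝ → Matrix (Fin p) (Fin p) ℂ)
    (hβt₂ : ∀ x, βt₂ x = (βt x).submatrix id Sum.inr)
    (θ : ℝ → Matrix (Fin p) (Fin p) ℂ)
    (hθ : ∀ x, θ x = (((β x).submatrix id Sum.inr)ᴴ)⁻¹) :
    (∀ x ∈ Set.Icc (0:ℝ) (2*ℓ),
      β x * J * (β x)ᴴ = 1 ∧
      IsUnit ((β x).submatrix id Sum.inl) ∧ IsUnit ((β x).submatrix id Sum.inr) ∧
      β x = θ x * βt x) ∧
    θ 0 = ((Real.sqrt 2 : ℝ) : ℂ) • 1 ∧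
    -- θ satisfies θ′ + θ(β̃′Jβ̃*β̃₂⁻¹) = 0 on [0,2ℓ]
    (∃ (βt' : ℝ → Matrix (Fin p) (Fin p ⊕ Fin p) ℂ) (θ' : ℝ → Matrix (Fin p) (Fin p) ℂ),
      (∀ x ∈ Set.Icc (0:ℝ) (2*ℓ), ∀ i k,
        HasDerivWithinAt (fun y => βt y i k) (βt' x i k) (Set.Icc (0:ℝ) (2*ℓ)) x) ∧
      (∀ x ∈ Set.Icc (0:ℝ) (2*ℓ), ∀ i k,
        HasDerivWithinAt (fun y => θ y i k) (θ' x i k) (Set.Icc (0:ℝ) (2*ℓ)) x) ∧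
      (∀ x ∈ Set.Icc (0:ℝ) (2*ℓ),
        θ' x + θ x * (βt' x * J * (βt x)ᴴ * (βt₂ x)⁻¹) = 0)) := by
  have hJH : Jᴴ = J := by
    rw [hJ, Matrix.fromBlocks_conjTranspose]; simp
  set s : Set ℝ := Set.Icc (0:ℝ) (2*ℓ) with hs
  -- entrywise derivatives of βᴴ
  have hβHdiff : ∀ x ∈ s, ∀ i k,
      HasDerivWithinAt (fun y => (β y)ᴴ i k) ((β' x)ᴴ i k) s x := by
    intro x hx i k
    simpa only [Matrix.conjTranspose_apply] using (hβdiff x hx k i).star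
  -- derivative of β J βᴴ is zero on s
  have hGderiv : ∀ x ∈ s, ∀ i k,
      HasDerivWithinAt (fun y => (β y * J * (β y)ᴴ) i k) 0 s x := by
    intro x hx i k
    have h1 : ∀ i k, HasDerivWithinAt (fun y => (β y * J) i k) ((β' x * J) i k) s x := by
      intro i k
      have := hasDerivWithinAt_matrix_mul (hβdiff x hx)
        (g := fun _ => J) (G := 0) (fun i j => hasDerivWithinAt_const _ _ _) i k
      rw [Matrix.mul_zero, add_zero] at this
      exact this
    have h2 := hasDerivWithinAt_matrix_mul h1 (hβHdiff x hx) i k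
    have hz : (β' x * J * (β x)ᴴ + (β x * J) * (β' x)ᴴ) = 0 := by
      have hc : (β x * J) * (β' x)ᴴ = (β' x * J * (β x)ᴴ)ᴴ := by
        rw [Matrix.conjTranspose_mul, Matrix.conjTranspose_mul, Matrix.conjTranspose_conjTranspose,
          hJH, Matrix.mul_assoc]
      rw [hc, hβJ x hx]
      simp
    rw [hz] at h2
    simpa using h2
  -- β J βᴴ = 1 on s
  have h0mem : (0:ℝ) ∈ s := by
    constructor <;> [rfl; positivity]
  have hG0 : β 0 * J * (β 0)ᴴ = 1 := by
    rw [hβ0, hJ]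
    rw [Matrix.conjTranspose_smul, Matrix.smul_mul, Matrix.smul_mul, Matrix.mul_smul,
      Matrix.conjTranspose_fromCols_eq_fromRows_conjTranspose,
      Matrix.fromCols_mul_fromBlocks, Matrix.fromCols_mul_fromRows]
    simp only [Matrix.mul_one, Matrix.one_mul, Matrix.mul_zero, Matrix.zero_mul,
      zero_add, add_zero, Matrix.conjTranspose_one, smul_smul]
    have h2 : ((Real.sqrt 2 : ℝ) : ℂ) * ((Real.sqrt 2 : ℝ) : ℂ) = 2 := by
      rw [← Complex.ofReal_mul, Real.mul_self_sqrt (by norm_num)]; norm_num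
    have hstar : star ((((Real.sqrt 2:ℝ)):ℂ))⁻¹ = ((((Real.sqrt 2:ℝ)):ℂ))⁻¹ := by
      rw [star_inv₀]; exact congrArg _ (Complex.conj_ofReal _)
    rw [hstar, ← mul_inv, h2, smul_add, ← add_smul]
    norm_num
  have key1 : ∀ x ∈ s, β x * J * (β x)ᴴ = 1 := by
    intro x hx
    have huniq : UniqueDiffOn ℝ s := uniqueDiffOn_Icc (by linarith)
    ext i k
    have hdiff : DifferentiableOn ℝ (fun y => (β y * J * (β y)ᴴ) i k) s :=
      fun y hy => ((hGderiv y hy i k).differentiableWithinAt)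
    have hder0 : ∀ y ∈ Set.Ico (0:ℝ) (2*ℓ),
        derivWithin (fun y => (β y * J * (β y)ᴴ) i k) s y = 0 := by
      intro y hy
      have hy' : y ∈ s := Set.mem_Icc_of_Ico hy
      exact (hGderiv y hy' i k).derivWithin (huniq y hy')
    have := constant_of_derivWithin_zero hdiff hder0 x hx
    rw [this, hG0]
  -- invertibility of both blocks on s
  have hblocks : ∀ x ∈ s,
      ((β x).submatrix id Sum.inl) * ((β x).submatrix id Sum.inr)ᴴ
        + ((β x).submatrix id Sum.inr) * ((β x).submatrix id Sum.inl)ᴴ = 1 := by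
    intro x hx
    have h := key1 x hx
    have hcols : β x = Matrix.fromCols ((β x).submatrix id Sum.inl)
        ((β x).submatrix id Sum.inr) := by
      ext i (j | j) <;> rfl
    rw [hcols, hJ, Matrix.conjTranspose_fromCols_eq_fromRows_conjTranspose,
      Matrix.fromCols_mul_fromBlocks, Matrix.fromCols_mul_fromRows] at h
    simp only [Matrix.mul_zero, Matrix.mul_one, zero_add, add_zero] at h
    rw [add_comm] at h
    exact h
  have hU1 : ∀ x ∈ s, IsUnit ((β x).submatrix id Sum.inl) := by
    intro x hx
    exact isUnit_of_add_conjTranspose _ _ (by rw [add_comm]; exact hblocks x hx)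
  have hU2 : ∀ x ∈ s, IsUnit ((β x).submatrix id Sum.inr) := by
    intro x hx
    exact isUnit_of_add_conjTranspose _ _ (hblocks x hx)
  -- notation for the second block and its conjugate transpose
  set β₂ : ℝ → Matrix (Fin p) (Fin p) ℂ := fun x => (β x).submatrix id Sum.inr with hβ₂
  set B : ℝ → Matrix (Fin p) (Fin p) ℂ := fun x => (β₂ x)ᴴ with hB
  set B' : ℝ → Matrix (Fin p) (Fin p) ℂ := fun x => ((β' x).submatrix id Sum.inr)ᴴ with hB'
  have hUB : ∀ x ∈ s, IsUnit (B x) := by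
    intro x hx
    rw [Matrix.isUnit_iff_isUnit_det, Matrix.det_conjTranspose, isUnit_iff_ne_zero]
    simp only [star_ne_zero]
    exact isUnit_iff_ne_zero.mp ((Matrix.isUnit_iff_isUnit_det _).mp (hU2 x hx))
  have hUβ₂det : ∀ x ∈ s, IsUnit (β₂ x).det := fun x hx =>
    (Matrix.isUnit_iff_isUnit_det _).mp (hU2 x hx)
  have hUBdet : ∀ x ∈ s, IsUnit (B x).det := fun x hx =>
    (Matrix.isUnit_iff_isUnit_det _).mp (hUB x hx)
  -- βt = B * β
  have hβtB : ∀ x, βt x = B x * β x := by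
    intro x
    ext i k
    simp [hβt, hH, Matrix.mul_apply, Matrix.conjTranspose_apply, hB, hβ₂]
  have hθB : ∀ x, θ x = (B x)⁻¹ := fun x => hθ x
  -- β = θ βt on s
  have hrec : ∀ x ∈ s, β x = θ x * βt x := by
    intro x hx
    rw [hβtB, hθB, ← Matrix.mul_assoc, Matrix.nonsing_inv_mul _ (hUBdet x hx), Matrix.one_mul]
  -- θ 0 = √2 • 1
  have hθ0 : θ 0 = ((Real.sqrt 2 : ℝ) : ℂ) • 1 := by
    have hβ₂0 : β₂ 0 = (((Real.sqrt 2 : ℝ) : ℂ))⁻¹ • 1 := by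
      simp only [hβ₂]
      ext i j
      rw [hβ0]
      simp [Matrix.fromCols, Matrix.one_apply]
    have hne : ((Real.sqrt 2 : ℝ) : ℂ) ≠ 0 := by
      simpa using Real.sqrt_ne_zero'.mpr (by norm_num : (0:ℝ) < 2)
    rw [hθB]
    simp only [hB]
    rw [hβ₂0, Matrix.conjTranspose_smul, Matrix.conjTranspose_one]
    have hstar : star ((((Real.sqrt 2 : ℝ) : ℂ))⁻¹) = (((Real.sqrt 2 : ℝ) : ℂ))⁻¹ := by
      rw [star_inv₀]
      simp [Complex.conj_ofReal]
    rw [hstar]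
    apply Matrix.inv_eq_right_inv
    rw [Matrix.smul_mul, Matrix.mul_smul, Matrix.one_mul, smul_smul,
      inv_mul_cancel₀ hne, one_smul]
  refine ⟨fun x hx => ⟨key1 x hx, hU1 x hx, hU2 x hx, hrec x hx⟩, hθ0, ?_⟩
  -- the differential equation
  -- entrywise derivatives of B
  have hBdiff : ∀ x ∈ s, ∀ i k,
      HasDerivWithinAt (fun y => B y i k) (B' x i k) s x := by
    intro x hx i k
    simpa only [hB, hB', hβ₂, Matrix.conjTranspose_apply, Matrix.submatrix_apply, id_eq] using
      (hβdiff x hx k (Sum.inr i)).star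
  refine ⟨fun x => B' x * β x + B x * β' x, fun x => -(θ x * B' x * θ x), ?_, ?_, ?_⟩
  · -- derivative of βt
    intro x hx i k
    have := hasDerivWithinAt_matrix_mul (hBdiff x hx) (hβdiff x hx) i k
    simp only [hβtB]
    exact this
  · -- derivative of θ
    intro x hx i k
    -- set up the normed ring structure on matrices
    letI : NormedRing (Matrix (Fin p) (Fin p) ℂ) := Matrix.linftyOpNormedRing
    letI : NormedAlgebra ℝ (Matrix (Fin p) (Fin p) ℂ) := Matrix.linftyOpNormedAlgebra
    letI : NormedAlgebra ℂ (Matrix (Fin p) (Fin p) ℂ) := Matrix.linftyOpNormedAlgebra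
    letI : CompleteSpace (Matrix (Fin p) (Fin p) ℂ) := FiniteDimensional.complete ℝ _
    -- matrix-level derivative of B
    have hBmat : HasDerivWithinAt (fun y => B y) (B' x) s x := by
      have hterm : ∀ i' j : Fin p, HasDerivWithinAt
          (fun y => B y i' j • Matrix.single i' j (1:ℂ))
          (B' x i' j • Matrix.single i' j (1:ℂ)) s x :=
        fun i' j => (hBdiff x hx i' j).smul_const _
      have hsum : HasDerivWithinAt
          (fun y => ∑ i' : Fin p, ∑ j : Fin p, B y i' j • Matrix.single i' j (1:ℂ))
          (∑ i' : Fin p, ∑ j : Fin p, B' x i' j • Matrix.single i' j (1:ℂ)) s x :=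
        HasDerivWithinAt.fun_sum fun i' _ => HasDerivWithinAt.fun_sum fun j _ => hterm i' j
      have hrep : ∀ (M : Matrix (Fin p) (Fin p) ℂ),
          ∑ i' : Fin p, ∑ j : Fin p, M i' j • Matrix.single i' j (1:ℂ) = M := by
        intro M
        ext a b
        simp [Matrix.sum_apply, Matrix.single, Matrix.one_apply, ite_and,
          Finset.sum_ite_eq', Finset.sum_ite_eq]
      have hfn : (fun y => ∑ i' : Fin p, ∑ j : Fin p,
          B y i' j • Matrix.single i' j (1:ℂ)) = fun y => B y :=
        funext fun y => hrep (B y)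
      rw [hfn, hrep (B' x)] at hsum
      exact hsum
    -- derivative of Ring.inverse ∘ B
    have hu : IsUnit (B x) := hUB x hx
    set u : (Matrix (Fin p) (Fin p) ℂ)ˣ := hu.unit with hudef
    have hufd : HasFDerivAt Ring.inverse
        (-ContinuousLinearMap.mulLeftRight ℝ _ ((↑u : Matrix (Fin p) (Fin p) ℂ)⁻¹)
          ((↑u : Matrix (Fin p) (Fin p) ℂ)⁻¹)) ((fun y => B y) x) := by
      have := hasFDerivAt_ringInverse (𝕜 := ℝ) u
      rw [← Matrix.coe_units_inv]
      exact this
    have hinv : HasDerivWithinAt (fun y => Ring.inverse (B y))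
        (-((↑u : Matrix (Fin p) (Fin p) ℂ)⁻¹ * B' x * (↑u : Matrix (Fin p) (Fin p) ℂ)⁻¹))
        s x := by
      have := hufd.comp_hasDerivWithinAt x hBmat
      exact this
    have huinv : (↑u : Matrix (Fin p) (Fin p) ℂ)⁻¹ = θ x := by
      rw [hθB, hu.unit_spec]
    rw [huinv] at hinv
    have hfun : (fun y => Ring.inverse (B y)) = fun y => θ y := by
      funext y
      rw [hθB, Matrix.nonsing_inv_eq_ringInverse]
    rw [hfun] at hinv
    -- extract the (i,k) entry via a continuous linear map
    let E : Matrix (Fin p) (Fin p) ℂ →ₗ[ℝ] ℂ :=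
      { toFun := fun M => M i k
        map_add' := fun _ _ => rfl
        map_smul' := fun _ _ => rfl }
    have hEcont : Continuous E := E.continuous_of_finiteDimensional
    exact ((⟨E, hEcont⟩ : Matrix (Fin p) (Fin p) ℂ →L[ℝ] ℂ).hasFDerivAt.comp_hasDerivWithinAt
      x hinv)
  · -- the ODE
    intro x hx
    have hβtH : (βt x)ᴴ = (β x)ᴴ * β₂ x := by
      rw [hβtB, Matrix.conjTranspose_mul, hB, Matrix.conjTranspose_conjTranspose]
    have hβt₂B : βt₂ x = B x * β₂ x := by
      rw [hβt₂, hβtB]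
      ext i j
      simp [Matrix.mul_apply, hβ₂]
    have hmain : (B' x * β x + B x * β' x) * J * (βt x)ᴴ = B' x * β₂ x := by
      have hexp : (B' x * β x + B x * β' x) * J * ((β x)ᴴ * β₂ x)
          = B' x * (β x * J * (β x)ᴴ) * β₂ x + B x * (β' x * J * (β x)ᴴ) * β₂ x := by
        simp only [Matrix.add_mul, Matrix.mul_assoc]
      rw [hβtH, hexp, key1 x hx, hβJ x hx, Matrix.mul_one, Matrix.mul_zero,
        Matrix.zero_mul, add_zero]
    show -(θ x * B' x * θ x) +
      θ x * ((B' x * β x + B x * β' x) * J * (βt x)ᴴ * (βt₂ x)⁻¹) = 0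
    rw [hmain, hβt₂B, Matrix.mul_inv_rev]
    have e : B' x * β₂ x * ((β₂ x)⁻¹ * (B x)⁻¹) = B' x * (B x)⁻¹ := by
      rw [Matrix.mul_assoc (B' x), ← Matrix.mul_assoc (β₂ x),
        Matrix.mul_nonsing_inv _ (hUβ₂det x hx), Matrix.one_mul]
    rw [e, ← hθB, ← Matrix.mul_assoc]
    simp
end

section
/- Let p ∈ ℕ, ℓ > 0, J = [[0, I_p],[I_p, 0]]. Let β = [β₁ β₂] : [0,2ℓ] → ℂ^{p×2p} be differentiable with β(0) = (1/√2)[I_p I_p] and β′(x) J β(x)* = 0 for all x (so β(x)Jβ(x)* ≡ I_p and β₁, β₂ are pointwise invertible), and let γ : [0,2ℓ] → ℂ^{p×2p} be differentiable with γ(0) = (1/√2)[−I_p I_p], β(x) J γ(x)* = 0 and γ′(x) J γ(x)* = 0 for all x (so γ(x)Jγ(x)* ≡ −I_p). Define γ̃(x) = (1/2)[ −(β₂(x)*)^{-1} (β₁(x)*)^{-1} ]. Then γ̃(x) J γ̃(x)* is invertible for each x, the matrix function ϑ(x) := γ(x) J γ̃(x)* ( γ̃(x) J γ̃(x)* )^{-1}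 is differentiable and satisfies γ(x) = ϑ(x) γ̃(x) for all x, ϑ(0) = I_p, and ϑ′(x) = −ϑ(x)·( γ̃′(x) J γ̃(x)* )·( γ̃(x) J γ̃(x)* )^{-1} on [0,2ℓ]. -/
open Matrix


namespace RGFB

variable {s : Set ℝ} {x : ℝ}

/-- entrywise product rule -/
lemma hd_mul {m n k : Type*} [Fintype n]
    {A : ℝ → Matrix m n ℂ} {A' : Matrix m n ℂ}
    {B : ℝ → Matrix n k ℂ} {B' : Matrix n k ℂ}
    (hA : ∀ i j, HasDerivWithinAt (fun y => A y i j) (A' i j) s x)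
    (hB : ∀ i j, HasDerivWithinAt (fun y => B y i j) (B' i j) s x) :
    ∀ i j, HasDerivWithinAt (fun y => (A y * B y) i j)
      ((A' * B x + A x * B') i j) s x := by
  intro i j
  have h := HasDerivWithinAt.fun_sum (u := Finset.univ)
    (fun c (_ : c ∈ Finset.univ) => ((hA i c).mul (hB c j)))
  have e1 : (fun y => (A y * B y) i j) = fun y => ∑ c, A y i c * B y c j := by
    funext y; simp [Matrix.mul_apply]
  have e2 : (A' * B x + A x * B') i j
      = ∑ c, (A' i c * B x c j + A x i c * B' c j) := by
    simp [Matrix.mul_apply, Matrix.add_apply, Finset.sum_add_distrib]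
  rw [e1, e2]; exact h

lemma hd_const {m n : Type*} (C : Matrix m n ℂ) :
    ∀ i j, HasDerivWithinAt (fun _ : ℝ => C i j) ((0 : Matrix m n ℂ) i j) s x := by
  intro i j
  simpa using hasDerivWithinAt_const x s (C i j)

lemma hd_ct {m n : Type*}
    {A : ℝ → Matrix m n ℂ} {A' : Matrix m n ℂ}
    (hA : ∀ i j, HasDerivWithinAt (fun y => A y i j) (A' i j) s x) :
    ∀ i j, HasDerivWithinAt (fun y => (A y)ᴴ i j) (A'ᴴ i j) s x := by
  intro i j
  simpa [Matrix.conjTranspose_apply] using (hA j i).star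

lemma const_entries {m n : Type*} {a b : ℝ} (hab : a < b)
    {F : ℝ → Matrix m n ℂ}
    (h : ∀ x ∈ Set.Icc a b, ∀ i j, HasDerivWithinAt (fun y => F y i j) 0 (Set.Icc a b) x) :
    ∀ x ∈ Set.Icc a b, F x = F a := by
  intro x hx
  ext i j
  refine constant_of_derivWithin_zero (f := fun y => F y i j)
    (fun y hy => (h y hy i j).differentiableWithinAt) (fun y hy => ?_) x hx
  have hy' : y ∈ Set.Icc a b := Set.Ico_subset_Icc_self hy
  exact (h y hy' i j).derivWithin (uniqueDiffOn_Icc hab y hy')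

section Inv

attribute [local instance] Matrix.linftyOpNormedAddCommGroup Matrix.linftyOpNormedSpace
attribute [local instance] Matrix.linftyOpNormedRing Matrix.linftyOpNormedAlgebra

variable {n : Type*} [Fintype n] [DecidableEq n]

lemma hd_matrix {A : ℝ → Matrix n n ℂ} {A' : Matrix n n ℂ}
    (h : ∀ i j, HasDerivWithinAt (fun y => A y i j) (A' i j) s x) :
    HasDerivWithinAt A A' s x := by
  have h1 : HasDerivWithinAt (fun y => ∑ i : n, ∑ j : n, (A y i j) • Matrix.single i j (1:ℂ))
      (∑ i : n, ∑ j : n, (A' i j) • Matrix.single i j (1:ℂ)) s x := by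
    refine HasDerivWithinAt.fun_sum (fun i _ => HasDerivWithinAt.fun_sum (fun j _ => ?_))
    exact (h i j).smul_const _
  have e : ∀ (M : Matrix n n ℂ), ∑ i : n, ∑ j : n, (M i j) • Matrix.single i j (1:ℂ) = M := by
    intro M
    conv_rhs => rw [matrix_eq_sum_single M]
    refine Finset.sum_congr rfl fun i _ => Finset.sum_congr rfl fun j _ => ?_
    rw [smul_single, smul_eq_mul, mul_one]
  have e2 : (fun y => ∑ i : n, ∑ j : n, (A y i j) • Matrix.single i j (1:ℂ)) = A := by
    funext y; exact e (A y)
  rw [e2, e A'] at h1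
  exact h1

omit [DecidableEq n] in
lemma hd_entry {A : ℝ → Matrix n n ℂ} {A' : Matrix n n ℂ}
    (h : HasDerivWithinAt A A' s x) (i j : n) :
    HasDerivWithinAt (fun y => A y i j) (A' i j) s x := by
  let l : Matrix n n ℂ →ₗ[ℝ] ℂ :=
    { toFun := fun M => M i j, map_add' := fun _ _ => rfl, map_smul' := fun _ _ => rfl }
  have hl : HasFDerivAt l.toContinuousLinearMap l.toContinuousLinearMap (A x) :=
    l.toContinuousLinearMap.hasFDerivAt
  have := hl.comp_hasDerivWithinAt x h
  exact this

lemma hd_inv (hx : x ∈ s)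
    {M : ℝ → Matrix n n ℂ} {M' : Matrix n n ℂ}
    (h : ∀ i j, HasDerivWithinAt (fun y => M y i j) (M' i j) s x)
    (hu : ∀ y ∈ s, IsUnit (M y)) :
    ∀ i j, HasDerivWithinAt (fun y => (M y)⁻¹ i j)
      ((-((M x)⁻¹ * M' * (M x)⁻¹)) i j) s x := by
  have hm := hd_matrix h
  obtain ⟨u, hu0⟩ := hu x hx
  have h1 : HasFDerivAt (Ring.inverse : Matrix n n ℂ → Matrix n n ℂ)
      (-ContinuousLinearMap.mulLeftRight ℝ _ ↑u⁻¹ ↑u⁻¹) (M x) := by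
    rw [← hu0]; exact hasFDerivAt_ringInverse u
  have h2 := h1.comp_hasDerivWithinAt x hm
  have hui : (↑u⁻¹ : Matrix n n ℂ) = (M x)⁻¹ := by
    rw [Matrix.coe_units_inv, hu0]
  have h3 : HasDerivWithinAt (fun y => (M y)⁻¹) (-((M x)⁻¹ * M' * (M x)⁻¹)) s x := by
    refine HasDerivWithinAt.congr ?_ (fun y hy => (Matrix.nonsing_inv_eq_ringInverse (M y)))
      (Matrix.nonsing_inv_eq_ringInverse (M x))
    convert h2 using 1
    · rfl
    simp [hui, Matrix.mul_assoc]
  exact fun i j => hd_entry h3 i j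

end Inv

variable {p : ℕ}

open ComplexOrder in
lemma isUnit_of_offdiag {A B : Matrix (Fin p) (Fin p) ℂ}
    (h : A * Bᴴ + B * Aᴴ = 1) : IsUnit A := by
  rw [Matrix.isUnit_iff_isUnit_det]
  by_contra hdet
  rw [isUnit_iff_ne_zero, not_not] at hdet
  have hdetH : (Aᴴ).det = 0 := by rw [Matrix.det_conjTranspose, hdet, star_zero]
  obtain ⟨v, hv, hv0⟩ := (Matrix.exists_mulVec_eq_zero_iff).mpr hdetH
  have hvA : star v ᵥ* A = 0 := by
    have := congrArg star hv0
    rwa [Matrix.star_mulVec, Matrix.conjTranspose_conjTranspose, star_zero] at this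
  have key : star v ⬝ᵥ ((A * Bᴴ + B * Aᴴ) *ᵥ v) = 0 := by
    rw [Matrix.add_mulVec, dotProduct_add, ← Matrix.mulVec_mulVec, ← Matrix.mulVec_mulVec,
      hv0, Matrix.mulVec_zero, dotProduct_zero, add_zero, Matrix.dotProduct_mulVec, hvA,
      zero_dotProduct]
  rw [h, Matrix.one_mulVec] at key
  exact hv (dotProduct_star_self_eq_zero.mp key)

lemma G_aux {A B : Matrix (Fin p) (Fin p) ℂ} (hA : IsUnit A) (hB : IsUnit B)
    (h : A * Bᴴ + B * Aᴴ = 1) :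
    ((Aᴴ)⁻¹ * B⁻¹ + (Bᴴ)⁻¹ * A⁻¹) * (B * Aᴴ * A * Bᴴ) = 1 := by
  have hAd : IsUnit A.det := (Matrix.isUnit_iff_isUnit_det A).mp hA
  have hBd : IsUnit B.det := (Matrix.isUnit_iff_isUnit_det B).mp hB
  have hAHd : IsUnit (Aᴴ).det := by rwa [Matrix.det_conjTranspose, isUnit_star]
  have hBHd : IsUnit (Bᴴ).det := by rwa [Matrix.det_conjTranspose, isUnit_star]
  haveI := A.invertibleOfIsUnitDet hAd
  haveI := B.invertibleOfIsUnitDet hBd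
  haveI := (Aᴴ).invertibleOfIsUnitDet hAHd
  haveI := (Bᴴ).invertibleOfIsUnitDet hBHd
  have hBA : B * Aᴴ = 1 - A * Bᴴ := by rw [← h]; abel
  have t1 : (Aᴴ)⁻¹ * B⁻¹ * (B * Aᴴ * A * Bᴴ) = A * Bᴴ := by
    simp only [Matrix.mul_assoc, Matrix.inv_mul_cancel_left_of_invertible]
  have t2 : (Bᴴ)⁻¹ * A⁻¹ * (B * Aᴴ * A * Bᴴ) = 1 - A * Bᴴ := by
    rw [hBA]
    simp only [Matrix.sub_mul, Matrix.mul_sub, Matrix.one_mul, Matrix.mul_assoc,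
      Matrix.inv_mul_cancel_left_of_invertible, Matrix.inv_mul_of_invertible]
  rw [Matrix.add_mul, t1, t2]
  abel

lemma smul_fromColumns {m n₁ n₂ : Type*} (a : ℂ) (A : Matrix m n₁ ℂ) (B : Matrix m n₂ ℂ) :
    Matrix.fromCols (a • A) (a • B) = a • Matrix.fromCols A B := by
  ext i j
  cases j <;> simp [Matrix.fromCols]

end RGFB

/-- **Proposition A.2 of the paper.**  Let `β` and `γ` on `[0,2ℓ]` be differentiable,
with `β(0) = (1/√2)[I_p I_p]`, `β′Jβ* ≡ 0` (so `βJβ* ≡ I_p`, `β₁, β₂` invertible),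
`γ(0) = (1/√2)[-I_p I_p]`, `βJγ* ≡ 0` and `γ′Jγ* ≡ 0` (so `γJγ* ≡ -I_p`).  With
`γ̃ = (1/2)[-(β₂*)⁻¹ (β₁*)⁻¹]`, the matrix `γ̃Jγ̃*` is invertible,
`ϑ := γJγ̃*(γ̃Jγ̃*)⁻¹` is differentiable and satisfies `γ = ϑγ̃`, `ϑ(0) = I_p`, and
`ϑ′ = -ϑ(γ̃′Jγ̃*)(γ̃Jγ̃*)⁻¹` on `[0,2ℓ]`. -/
theorem recover_gamma_from_beta
    (p : ℕ) (ℓ : ℝ) (hℓ : 0 < ℓ)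
    (J : Matrix (Fin p ⊕ Fin p) (Fin p ⊕ Fin p) ℂ)
    (hJ : J = Matrix.fromBlocks 0 1 1 0)
    (β β' γ γ' : ℝ → Matrix (Fin p) (Fin p ⊕ Fin p) ℂ)
    (hβdiff : ∀ x ∈ Set.Icc (0:ℝ) (2*ℓ), ∀ i k,
      HasDerivWithinAt (fun y => β y i k) (β' x i k) (Set.Icc (0:ℝ) (2*ℓ)) x)
    (hγdiff : ∀ x ∈ Set.Icc (0:ℝ) (2*ℓ), ∀ i k,
      HasDerivWithinAt (fun y => γ y i k) (γ' x i k) (Set.Icc (0:ℝ) (2*ℓ)) x)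
    (hβ0 : β 0 = (((Real.sqrt 2 : ℝ) : ℂ))⁻¹ • Matrix.fromCols 1 1)
    (hγ0 : γ 0 = (((Real.sqrt 2 : ℝ) : ℂ))⁻¹ • Matrix.fromCols (-1) 1)
    (hβJ : ∀ x ∈ Set.Icc (0:ℝ) (2*ℓ), β' x * J * (β x)ᴴ = 0)
    (hβγ : ∀ x ∈ Set.Icc (0:ℝ) (2*ℓ), β x * J * (γ x)ᴴ = 0)
    (hγJ : ∀ x ∈ Set.Icc (0:ℝ) (2*ℓ), γ' x * J * (γ x)ᴴ = 0)
    (γt : ℝ → Matrix (Fin p) (Fin p ⊕ Fin p) ℂ)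
    (hγt : ∀ x, γt x = (1/2 : ℂ) • Matrix.fromCols
      (-((((β x).submatrix id Sum.inr)ᴴ)⁻¹)) ((((β x).submatrix id Sum.inl)ᴴ)⁻¹))
    (ϑ : ℝ → Matrix (Fin p) (Fin p) ℂ)
    (hϑ : ∀ x, ϑ x = γ x * J * (γt x)ᴴ * (γt x * J * (γt x)ᴴ)⁻¹) :
    (∀ x ∈ Set.Icc (0:ℝ) (2*ℓ),
      β x * J * (β x)ᴴ = 1 ∧
      IsUnit ((β x).submatrix id Sum.inl) ∧ IsUnit ((β x).submatrix id Sum.inr) ∧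
      γ x * J * (γ x)ᴴ = -1 ∧
      IsUnit (γt x * J * (γt x)ᴴ) ∧
      γ x = ϑ x * γt x) ∧
    ϑ 0 = 1 ∧
    -- ϑ is differentiable and solves ϑ′ = -ϑ(γ̃′Jγ̃*)(γ̃Jγ̃*)⁻¹
    (∃ (γt' : ℝ → Matrix (Fin p) (Fin p ⊕ Fin p) ℂ) (ϑ' : ℝ → Matrix (Fin p) (Fin p) ℂ),
      (∀ x ∈ Set.Icc (0:ℝ) (2*ℓ), ∀ i k,
        HasDerivWithinAt (fun y => γt y i k) (γt' x i k) (Set.Icc (0:ℝ) (2*ℓ)) x) ∧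
      (∀ x ∈ Set.Icc (0:ℝ) (2*ℓ), ∀ i k,
        HasDerivWithinAt (fun y => ϑ y i k) (ϑ' x i k) (Set.Icc (0:ℝ) (2*ℓ)) x) ∧
      (∀ x ∈ Set.Icc (0:ℝ) (2*ℓ),
        ϑ' x = -(ϑ x * (γt' x * J * (γt x)ᴴ) * (γt x * J * (γt x)ᴴ)⁻¹))) := by
  have h2ℓ : (0:ℝ) < 2*ℓ := by linarith
  have h0s : (0:ℝ) ∈ Set.Icc (0:ℝ) (2*ℓ) := Set.mem_Icc.mpr ⟨le_refl 0, by linarith⟩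
  have hJH : Jᴴ = J := by rw [hJ]; simp [Matrix.fromBlocks_conjTranspose]
  -- scalar facts
  set c : ℂ := (((Real.sqrt 2 : ℝ) : ℂ))⁻¹ with hc
  have hs2 : ((Real.sqrt 2 : ℝ) : ℂ) * ((Real.sqrt 2 : ℝ) : ℂ) = 2 := by
    rw [← Complex.ofReal_mul, Real.mul_self_sqrt (by norm_num)]; norm_num
  have hs2ne : ((Real.sqrt 2 : ℝ) : ℂ) ≠ 0 := by
    simpa using Real.sqrt_ne_zero'.mpr (by norm_num : (0:ℝ) < 2)
  have hcs : star c = c := by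
    rw [hc]; simp [Complex.star_def, Complex.conj_ofReal]
  have hcc : c * c = (2:ℂ)⁻¹ := by rw [hc, ← mul_inv, hs2]
  -- βJβᴴ is constant
  have hββ : ∀ x ∈ Set.Icc (0:ℝ) (2*ℓ), β x * J * (β x)ᴴ = 1 := by
    have hconst := RGFB.const_entries h2ℓ (F := fun y => β y * J * (β y)ᴴ) ?_
    · intro x hx
      rw [hconst x hx, hβ0]
      rw [Matrix.conjTranspose_smul, Matrix.conjTranspose_fromCols_eq_fromRows_conjTranspose,
        hJ, Matrix.smul_mul, Matrix.smul_mul, Matrix.mul_smul, smul_smul, hcs, hcc,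
        Matrix.fromCols_mul_fromBlocks]
      simp only [Matrix.mul_zero, Matrix.mul_one, zero_add, add_zero,
        Matrix.conjTranspose_one, Matrix.fromCols_mul_fromRows, Matrix.one_mul]
      rw [← two_smul ℂ (1 : Matrix (Fin p) (Fin p) ℂ), smul_smul,
        inv_mul_cancel₀ (two_ne_zero), one_smul]
    · intro x hx i j
      have h1 := RGFB.hd_mul (RGFB.hd_mul (hβdiff x hx) (RGFB.hd_const J))
        (RGFB.hd_ct (hβdiff x hx))
      have h2 : β x * J * (β' x)ᴴ = 0 := by
        have h3 := congrArg conjTranspose (hβJ x hx)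
        rwa [Matrix.conjTranspose_mul, Matrix.conjTranspose_mul,
          Matrix.conjTranspose_conjTranspose, hJH, Matrix.conjTranspose_zero,
          ← Matrix.mul_assoc] at h3
      have hz : (β' x * J + β x * (0 : Matrix (Fin p ⊕ Fin p) (Fin p ⊕ Fin p) ℂ)) * (β x)ᴴ + β x * J * (β' x)ᴴ = 0 := by
        rw [Matrix.mul_zero, add_zero, hβJ x hx, h2, add_zero]
      have h4 := h1 i j
      rw [hz] at h4
      simpa using h4
  -- γJγᴴ is constant
  have hγγ : ∀ x ∈ Set.Icc (0:ℝ) (2*ℓ), γ x * J * (γ x)ᴴ = -1 := by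
    have hconst := RGFB.const_entries h2ℓ (F := fun y => γ y * J * (γ y)ᴴ) ?_
    · intro x hx
      rw [hconst x hx, hγ0]
      rw [Matrix.conjTranspose_smul, Matrix.conjTranspose_fromCols_eq_fromRows_conjTranspose,
        hJ, Matrix.smul_mul, Matrix.smul_mul, Matrix.mul_smul, smul_smul, hcs, hcc,
        Matrix.fromCols_mul_fromBlocks]
      simp only [Matrix.mul_zero, Matrix.mul_one, zero_add, add_zero,
        Matrix.conjTranspose_one, Matrix.conjTranspose_neg, Matrix.zero_mul,
        Matrix.fromCols_mul_fromRows, Matrix.one_mul, Matrix.mul_neg, Matrix.neg_mul,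
        neg_zero]
      rw [← neg_add, ← two_smul ℂ (1 : Matrix (Fin p) (Fin p) ℂ),
        smul_neg, smul_smul, inv_mul_cancel₀ (two_ne_zero), one_smul]
    · intro x hx i j
      have h1 := RGFB.hd_mul (RGFB.hd_mul (hγdiff x hx) (RGFB.hd_const J))
        (RGFB.hd_ct (hγdiff x hx))
      have h2 : γ x * J * (γ' x)ᴴ = 0 := by
        have h3 := congrArg conjTranspose (hγJ x hx)
        rwa [Matrix.conjTranspose_mul, Matrix.conjTranspose_mul,
          Matrix.conjTranspose_conjTranspose, hJH, Matrix.conjTranspose_zero,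
          ← Matrix.mul_assoc] at h3
      have hz : (γ' x * J + γ x * (0 : Matrix (Fin p ⊕ Fin p) (Fin p ⊕ Fin p) ℂ)) * (γ x)ᴴ + γ x * J * (γ' x)ᴴ = 0 := by
        rw [Matrix.mul_zero, add_zero, hγJ x hx, h2, add_zero]
      have h4 := h1 i j
      rw [hz] at h4
      simpa using h4

  -- splitting of β into column blocks
  have hsplit : ∀ y : ℝ, β y
      = Matrix.fromCols ((β y).submatrix id Sum.inl) ((β y).submatrix id Sum.inr) := by
    intro y; ext i k
    cases k <;> simp [Matrix.fromCols, Matrix.submatrix_apply]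
  have hform : ∀ y : ℝ, β y * J * (β y)ᴴ
      = (β y).submatrix id Sum.inr * ((β y).submatrix id Sum.inl)ᴴ
        + (β y).submatrix id Sum.inl * ((β y).submatrix id Sum.inr)ᴴ := by
    intro y
    conv_lhs => rw [hsplit y, hJ]
    rw [Matrix.fromCols_mul_fromBlocks,
      Matrix.conjTranspose_fromCols_eq_fromRows_conjTranspose,
      Matrix.fromCols_mul_fromRows]
    simp only [Matrix.mul_zero, Matrix.mul_one, zero_add, add_zero]
  have hoff : ∀ x ∈ Set.Icc (0:ℝ) (2*ℓ),
      (β x).submatrix id Sum.inr * ((β x).submatrix id Sum.inl)ᴴ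
        + (β x).submatrix id Sum.inl * ((β x).submatrix id Sum.inr)ᴴ = 1 := by
    intro x hx; rw [← hform x]; exact hββ x hx
  have hU1 : ∀ x ∈ Set.Icc (0:ℝ) (2*ℓ), IsUnit ((β x).submatrix id Sum.inl) := by
    intro x hx
    exact RGFB.isUnit_of_offdiag (B := (β x).submatrix id Sum.inr)
      (by rw [add_comm]; exact hoff x hx)
  have hU2 : ∀ x ∈ Set.Icc (0:ℝ) (2*ℓ), IsUnit ((β x).submatrix id Sum.inr) := by
    intro x hx
    exact RGFB.isUnit_of_offdiag (B := (β x).submatrix id Sum.inl) (hoff x hx)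
  have hU1d : ∀ x ∈ Set.Icc (0:ℝ) (2*ℓ), IsUnit ((β x).submatrix id Sum.inl).det :=
    fun x hx => (Matrix.isUnit_iff_isUnit_det _).mp (hU1 x hx)
  have hU2d : ∀ x ∈ Set.Icc (0:ℝ) (2*ℓ), IsUnit ((β x).submatrix id Sum.inr).det :=
    fun x hx => (Matrix.isUnit_iff_isUnit_det _).mp (hU2 x hx)
  have hU1H : ∀ x ∈ Set.Icc (0:ℝ) (2*ℓ), IsUnit (((β x).submatrix id Sum.inl)ᴴ) := by
    intro x hx
    rw [Matrix.isUnit_iff_isUnit_det, Matrix.det_conjTranspose, isUnit_star]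
    exact hU1d x hx
  have hU2H : ∀ x ∈ Set.Icc (0:ℝ) (2*ℓ), IsUnit (((β x).submatrix id Sum.inr)ᴴ) := by
    intro x hx
    rw [Matrix.isUnit_iff_isUnit_det, Matrix.det_conjTranspose, isUnit_star]
    exact hU2d x hx
  -- conjugate transpose of γt
  have hγtH : ∀ y : ℝ, (γt y)ᴴ = (1/2 : ℂ) • Matrix.fromRows
      (-(((β y).submatrix id Sum.inr)⁻¹)) (((β y).submatrix id Sum.inl)⁻¹) := by
    intro y
    rw [hγt y, Matrix.conjTranspose_smul,
      Matrix.conjTranspose_fromCols_eq_fromRows_conjTranspose]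
    congr 1
    · simp
    · rw [Matrix.conjTranspose_neg, Matrix.conjTranspose_nonsing_inv,
        Matrix.conjTranspose_conjTranspose, Matrix.conjTranspose_nonsing_inv,
        Matrix.conjTranspose_conjTranspose]
  have hγtJform : ∀ y : ℝ, γt y * J = (1/2 : ℂ) • Matrix.fromCols
      ((((β y).submatrix id Sum.inl)ᴴ)⁻¹) (-((((β y).submatrix id Sum.inr)ᴴ)⁻¹)) := by
    intro y
    rw [hγt y, hJ, Matrix.smul_mul, Matrix.fromCols_mul_fromBlocks]
    simp only [Matrix.mul_zero, Matrix.mul_one, zero_add, add_zero]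
  have hGform : ∀ y : ℝ, γt y * J * (γt y)ᴴ
      = -((4:ℂ)⁻¹ • ((((β y).submatrix id Sum.inl)ᴴ)⁻¹ * ((β y).submatrix id Sum.inr)⁻¹
          + ((((β y).submatrix id Sum.inr)ᴴ)⁻¹) * ((β y).submatrix id Sum.inl)⁻¹)) := by
    intro y
    rw [hγtJform y, hγtH y, Matrix.smul_mul, Matrix.mul_smul, smul_smul,
      Matrix.fromCols_mul_fromRows]
    simp only [Matrix.mul_neg, Matrix.neg_mul, ← neg_add, smul_neg]
    norm_num
  have hGunit : ∀ x ∈ Set.Icc (0:ℝ) (2*ℓ), IsUnit (γt x * J * (γt x)ᴴ) := by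
    intro x hx
    have haux := RGFB.G_aux (hU1 x hx) (hU2 x hx) (by rw [add_comm]; exact hoff x hx)
    have hmul : (γt x * J * (γt x)ᴴ) * ((-4:ℂ) • ((β x).submatrix id Sum.inr
        * ((β x).submatrix id Sum.inl)ᴴ * ((β x).submatrix id Sum.inl)
        * ((β x).submatrix id Sum.inr)ᴴ)) = 1 := by
      rw [hGform x, ← neg_smul, Matrix.smul_mul, Matrix.mul_smul, smul_smul,
        show ((-(4:ℂ)⁻¹) * (-4) = 1) by norm_num, one_smul, haux]
    rw [Matrix.isUnit_iff_isUnit_det]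
    exact IsUnit.of_mul_eq_one _ (by rw [← Matrix.det_mul, hmul, Matrix.det_one])
  have hGdet : ∀ x ∈ Set.Icc (0:ℝ) (2*ℓ), IsUnit (γt x * J * (γt x)ᴴ).det :=
    fun x hx => (Matrix.isUnit_iff_isUnit_det _).mp (hGunit x hx)
  -- β J γtᴴ = 0
  have hβγt : ∀ x ∈ Set.Icc (0:ℝ) (2*ℓ), β x * J * (γt x)ᴴ = 0 := by
    intro x hx
    conv_lhs => rw [hsplit x, hJ]
    rw [Matrix.fromCols_mul_fromBlocks, hγtH x, Matrix.mul_smul,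
      Matrix.fromCols_mul_fromRows]
    simp only [Matrix.mul_zero, Matrix.mul_one, zero_add, add_zero, Matrix.mul_neg]
    rw [Matrix.mul_nonsing_inv _ (hU2d x hx), Matrix.mul_nonsing_inv _ (hU1d x hx)]
    simp
  have hγtJβ : ∀ x ∈ Set.Icc (0:ℝ) (2*ℓ), γt x * J * (β x)ᴴ = 0 := by
    intro x hx
    have h3 := congrArg Matrix.conjTranspose (hβγt x hx)
    rwa [Matrix.conjTranspose_mul, Matrix.conjTranspose_mul,
      Matrix.conjTranspose_conjTranspose, hJH, Matrix.conjTranspose_zero,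
      ← Matrix.mul_assoc] at h3
  have hγJβ : ∀ x ∈ Set.Icc (0:ℝ) (2*ℓ), γ x * J * (β x)ᴴ = 0 := by
    intro x hx
    have h3 := congrArg Matrix.conjTranspose (hβγ x hx)
    rwa [Matrix.conjTranspose_mul, Matrix.conjTranspose_mul,
      Matrix.conjTranspose_conjTranspose, hJH, Matrix.conjTranspose_zero,
      ← Matrix.mul_assoc] at h3
  -- γ = ϑ γt
  have hθγt : ∀ x ∈ Set.Icc (0:ℝ) (2*ℓ), γ x = ϑ x * γt x := by
    intro x hx
    set M := Matrix.fromRows (β x) (γt x) with hM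
    have hMJM : M * J * Mᴴ
        = Matrix.fromBlocks 1 0 0 (γt x * J * (γt x)ᴴ) := by
      rw [hM, Matrix.fromRows_mul, Matrix.conjTranspose_fromRows_eq_fromCols_conjTranspose,
        Matrix.fromRows_mul_fromCols, hββ x hx, hβγt x hx, hγtJβ x hx]
    have hMone : M * (J * Mᴴ * (Matrix.fromBlocks 1 0 0 ((γt x * J * (γt x)ᴴ)⁻¹))) = 1 := by
      rw [← Matrix.mul_assoc, ← Matrix.mul_assoc, hMJM, Matrix.fromBlocks_multiply]
      rw [Matrix.mul_nonsing_inv _ (hGdet x hx)]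
      simp [Matrix.fromBlocks_one]
    have hMdet : IsUnit M.det :=
      IsUnit.of_mul_eq_one _ (by rw [← Matrix.det_mul, hMone, Matrix.det_one])
    have hCM : (γ x * M⁻¹) * M = γ x := by
      rw [Matrix.mul_assoc, Matrix.nonsing_inv_mul M hMdet, Matrix.mul_one]
    have hdecomp : γ x = (γ x * M⁻¹).toCols₁ * β x + (γ x * M⁻¹).toCols₂ * γt x := by
      conv_lhs => rw [← hCM]
      conv_lhs => rw [← Matrix.fromCols_toCols (γ x * M⁻¹), hM]
      rw [Matrix.fromCols_mul_fromRows]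
    have hC1 : (γ x * M⁻¹).toCols₁ = 0 := by
      have h0 := hγJβ x hx
      conv_lhs at h0 => rw [hdecomp]
      rw [Matrix.add_mul, Matrix.add_mul] at h0
      have e1 : (γ x * M⁻¹).toCols₁ * β x * J * (β x)ᴴ = (γ x * M⁻¹).toCols₁ := by
        rw [Matrix.mul_assoc, Matrix.mul_assoc, ← Matrix.mul_assoc (β x), hββ x hx,
          Matrix.mul_one]
      have e2 : (γ x * M⁻¹).toCols₂ * γt x * J * (β x)ᴴ = 0 := by
        rw [Matrix.mul_assoc, Matrix.mul_assoc, ← Matrix.mul_assoc (γt x), hγtJβ x hx,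
          Matrix.mul_zero]
      rw [e1, e2, add_zero] at h0
      exact h0
    have hγ2 : γ x = (γ x * M⁻¹).toCols₂ * γt x := by
      rw [hC1, Matrix.zero_mul, zero_add] at hdecomp
      exact hdecomp
    have hGG := Matrix.mul_nonsing_inv _ (hGdet x hx)
    have hϑC : ϑ x = (γ x * M⁻¹).toCols₂ := by
      rw [hϑ x]
      conv_lhs => rw [hγ2]
      simp only [Matrix.mul_assoc]
      simp only [Matrix.mul_assoc] at hGG
      rw [hGG, Matrix.mul_one]
    rw [hϑC]
    exact hγ2
  -- ϑ 0 = 1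
  have hB10 : (β 0).submatrix id Sum.inl = c • (1 : Matrix (Fin p) (Fin p) ℂ) := by
    rw [hβ0]; ext i j
    simp [Matrix.fromCols, Matrix.submatrix_apply]
  have hB20 : (β 0).submatrix id Sum.inr = c • (1 : Matrix (Fin p) (Fin p) ℂ) := by
    rw [hβ0]; ext i j
    simp [Matrix.fromCols, Matrix.submatrix_apply]
  have hinv0 : ((c • (1 : Matrix (Fin p) (Fin p) ℂ))ᴴ)⁻¹
      = ((Real.sqrt 2 : ℝ) : ℂ) • (1 : Matrix (Fin p) (Fin p) ℂ) := by
    rw [Matrix.conjTranspose_smul, Matrix.conjTranspose_one, hcs]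
    apply Matrix.inv_eq_right_inv
    rw [Matrix.smul_mul, Matrix.mul_smul, smul_smul, Matrix.one_mul, hc,
      inv_mul_cancel₀ hs2ne, one_smul]
  have h12 : (1/2 : ℂ) * ((Real.sqrt 2 : ℝ) : ℂ) = c := by
    rw [hc]
    field_simp
    linear_combination hs2
  have hγt0 : γt 0 = γ 0 := by
    rw [hγt 0, hγ0, hB10, hB20, hinv0]
    have : -(((Real.sqrt 2:ℝ):ℂ) • (1 : Matrix (Fin p) (Fin p) ℂ))
        = ((Real.sqrt 2:ℝ):ℂ) • (-1 : Matrix (Fin p) (Fin p) ℂ) := by rw [smul_neg]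
    rw [this, RGFB.smul_fromColumns, smul_smul, h12]
  have hϑ0 : ϑ 0 = 1 := by
    rw [hϑ 0, ← hγt0]
    exact Matrix.mul_nonsing_inv _ (hGdet 0 h0s)
  refine ⟨fun x hx => ⟨hββ x hx, hU1 x hx, hU2 x hx, hγγ x hx, hGunit x hx, hθγt x hx⟩, hϑ0, ?_⟩
  -- derivative part
  refine ⟨fun x => (1/2 : ℂ) • Matrix.fromCols
      ((((β x).submatrix id Sum.inr)ᴴ)⁻¹ * ((β' x).submatrix id Sum.inr)ᴴ
        * (((β x).submatrix id Sum.inr)ᴴ)⁻¹)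
      (-((((β x).submatrix id Sum.inl)ᴴ)⁻¹ * ((β' x).submatrix id Sum.inl)ᴴ
        * (((β x).submatrix id Sum.inl)ᴴ)⁻¹)), ?_⟩
  set γt' : ℝ → Matrix (Fin p) (Fin p ⊕ Fin p) ℂ := fun x =>
    (1/2 : ℂ) • Matrix.fromCols
      ((((β x).submatrix id Sum.inr)ᴴ)⁻¹ * ((β' x).submatrix id Sum.inr)ᴴ
        * (((β x).submatrix id Sum.inr)ᴴ)⁻¹)
      (-((((β x).submatrix id Sum.inl)ᴴ)⁻¹ * ((β' x).submatrix id Sum.inl)ᴴ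
        * (((β x).submatrix id Sum.inl)ᴴ)⁻¹)) with hγt'def
  -- derivative of γt
  have hγtd : ∀ x ∈ Set.Icc (0:ℝ) (2*ℓ), ∀ i k,
      HasDerivWithinAt (fun y => γt y i k) (γt' x i k) (Set.Icc (0:ℝ) (2*ℓ)) x := by
    intro x hx
    have hB2H : ∀ i j, HasDerivWithinAt (fun y => ((β y).submatrix id Sum.inr)ᴴ i j)
        ((((β' x).submatrix id Sum.inr)ᴴ) i j) (Set.Icc (0:ℝ) (2*ℓ)) x :=
      RGFB.hd_ct (fun i j => hβdiff x hx i (Sum.inr j))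
    have hB1H : ∀ i j, HasDerivWithinAt (fun y => ((β y).submatrix id Sum.inl)ᴴ i j)
        ((((β' x).submatrix id Sum.inl)ᴴ) i j) (Set.Icc (0:ℝ) (2*ℓ)) x :=
      RGFB.hd_ct (fun i j => hβdiff x hx i (Sum.inl j))
    have hinv2 := RGFB.hd_inv hx hB2H (fun y hy => hU2H y hy)
    have hinv1 := RGFB.hd_inv hx hB1H (fun y hy => hU1H y hy)
    intro i k
    cases k with
    | inl j =>
        have e1 : (fun y => γt y i (Sum.inl j))
            = fun y => (1/2 : ℂ) * (-(((((β y).submatrix id Sum.inr)ᴴ)⁻¹) i j)) := by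
          funext y; rw [hγt y]; simp [Matrix.fromCols]
        have e2 : γt' x i (Sum.inl j)
            = (1/2 : ℂ) * (-((-((((β x).submatrix id Sum.inr)ᴴ)⁻¹
                * ((β' x).submatrix id Sum.inr)ᴴ
                * (((β x).submatrix id Sum.inr)ᴴ)⁻¹)) i j)) := by
          rw [hγt'def]; simp [Matrix.fromCols]
        rw [e1, e2]
        exact ((hinv2 i j).neg).const_mul _
    | inr j =>
        have e1 : (fun y => γt y i (Sum.inr j))
            = fun y => (1/2 : ℂ) * ((((β y).submatrix id Sum.inl)ᴴ)⁻¹ i j) := by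
          funext y; rw [hγt y]; simp [Matrix.fromCols]
        have e2 : γt' x i (Sum.inr j)
            = (1/2 : ℂ) * ((-((((β x).submatrix id Sum.inl)ᴴ)⁻¹
                * ((β' x).submatrix id Sum.inl)ᴴ
                * (((β x).submatrix id Sum.inl)ᴴ)⁻¹)) i j) := by
          rw [hγt'def]; simp [Matrix.fromCols]
        rw [e1, e2]
        exact (hinv1 i j).const_mul _
  -- derivative of G
  have hGd : ∀ x ∈ Set.Icc (0:ℝ) (2*ℓ), ∀ i j,
      HasDerivWithinAt (fun y => (γt y * J * (γt y)ᴴ) i j)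
        ((γt' x * J * (γt x)ᴴ + γt x * J * (γt' x)ᴴ) i j) (Set.Icc (0:ℝ) (2*ℓ)) x := by
    intro x hx
    have h1 := RGFB.hd_mul (RGFB.hd_mul (hγtd x hx) (RGFB.hd_const J))
      (RGFB.hd_ct (hγtd x hx))
    have hz : (γt' x * J + γt x * (0 : Matrix (Fin p ⊕ Fin p) (Fin p ⊕ Fin p) ℂ)) * (γt x)ᴴ
        + γt x * J * (γt' x)ᴴ = γt' x * J * (γt x)ᴴ + γt x * J * (γt' x)ᴴ := by
      rw [Matrix.mul_zero, add_zero]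
    intro i j
    have h4 := h1 i j
    rw [hz] at h4
    exact h4
  refine ⟨fun x => (γ' x * J * (γt x)ᴴ + γ x * J * (γt' x)ᴴ) * (γt x * J * (γt x)ᴴ)⁻¹
      + (γ x * J * (γt x)ᴴ) * (-((γt x * J * (γt x)ᴴ)⁻¹
          * (γt' x * J * (γt x)ᴴ + γt x * J * (γt' x)ᴴ) * (γt x * J * (γt x)ᴴ)⁻¹)),
    hγtd, ?_, ?_⟩
  · -- ϑ is differentiable with the stated derivative
    intro x hx
    have hAd : ∀ i j, HasDerivWithinAt (fun y => (γ y * J * (γt y)ᴴ) i j)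
        ((γ' x * J * (γt x)ᴴ + γ x * J * (γt' x)ᴴ) i j) (Set.Icc (0:ℝ) (2*ℓ)) x := by
      have h1 := RGFB.hd_mul (RGFB.hd_mul (hγdiff x hx) (RGFB.hd_const J))
        (RGFB.hd_ct (hγtd x hx))
      have hz : (γ' x * J + γ x * (0 : Matrix (Fin p ⊕ Fin p) (Fin p ⊕ Fin p) ℂ)) * (γt x)ᴴ
          + γ x * J * (γt' x)ᴴ = γ' x * J * (γt x)ᴴ + γ x * J * (γt' x)ᴴ := by
        rw [Matrix.mul_zero, add_zero]
      intro i j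
      have h4 := h1 i j
      rw [hz] at h4
      exact h4
    have hinvG := RGFB.hd_inv hx (hGd x hx) (fun y hy => hGunit y hy)
    intro i j
    have h5 := RGFB.hd_mul hAd hinvG i j
    have e1 : (fun y => ϑ y i j)
        = fun y => ((γ y * J * (γt y)ᴴ) * (γt y * J * (γt y)ᴴ)⁻¹) i j := by
      funext y; rw [hϑ y]
    rw [e1]
    exact h5
  · -- the ODE
    intro x hx
    have hγ2 : γ x = ϑ x * γt x := hθγt x hx
    have hA : γ x * J * (γt x)ᴴ = ϑ x * (γt x * J * (γt x)ᴴ) := by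
      conv_lhs => rw [hγ2]
      simp only [Matrix.mul_assoc]
    have hA' : γ x * J * (γt' x)ᴴ = ϑ x * (γt x * J * (γt' x)ᴴ) := by
      conv_lhs => rw [hγ2]
      simp only [Matrix.mul_assoc]
    have h5 := hγγ x hx
    rw [hγ2, Matrix.conjTranspose_mul] at h5
    have hϑGϑ : ϑ x * (γt x * J * (γt x)ᴴ) * (ϑ x)ᴴ = -1 := by
      simp only [Matrix.mul_assoc] at h5 ⊢
      exact h5
    have hϑdet : IsUnit (ϑ x).det := by
      have h7 : ϑ x * ((γt x * J * (γt x)ᴴ) * ((ϑ x)ᴴ * (-1))) = 1 := by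
        rw [show ϑ x * ((γt x * J * (γt x)ᴴ) * ((ϑ x)ᴴ * (-1)))
            = (ϑ x * (γt x * J * (γt x)ᴴ) * (ϑ x)ᴴ) * (-1) by simp only [Matrix.mul_assoc],
          hϑGϑ]
        simp
      exact IsUnit.of_mul_eq_one _ (by rw [← Matrix.det_mul, h7, Matrix.det_one])
    have hϑHdet : IsUnit ((ϑ x)ᴴ).det := by
      rw [Matrix.det_conjTranspose, isUnit_star]; exact hϑdet
    have hγ'γt : γ' x * J * (γt x)ᴴ = 0 := by
      have h8 := hγJ x hx
      rw [hγ2, Matrix.conjTranspose_mul] at h8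
      have h9 := congrArg (fun Z => Z * ((ϑ x)ᴴ)⁻¹) h8
      simp only [Matrix.zero_mul] at h9
      have e : γ' x * J * ((γt x)ᴴ * (ϑ x)ᴴ) * ((ϑ x)ᴴ)⁻¹
          = γ' x * J * (γt x)ᴴ * ((ϑ x)ᴴ * ((ϑ x)ᴴ)⁻¹) := by
        simp only [Matrix.mul_assoc]
      rw [e, Matrix.mul_nonsing_inv _ hϑHdet, Matrix.mul_one] at h9
      exact h9
    haveI := (γt x * J * (γt x)ᴴ).invertibleOfIsUnitDet (hGdet x hx)
    beta_reduce
    rw [hγ'γt, zero_add, hA', hA]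
    have k1 : (γt x * J * (γt x)ᴴ) * ((γt x * J * (γt x)ᴴ)⁻¹
        * (γt' x * J * (γt x)ᴴ + γt x * J * (γt' x)ᴴ) * (γt x * J * (γt x)ᴴ)⁻¹)
        = (γt' x * J * (γt x)ᴴ + γt x * J * (γt' x)ᴴ) * (γt x * J * (γt x)ᴴ)⁻¹ := by
      rw [Matrix.mul_assoc ((γt x * J * (γt x)ᴴ)⁻¹), Matrix.mul_inv_cancel_left_of_invertible]
    rw [Matrix.mul_neg, Matrix.mul_assoc (ϑ x) (γt x * J * (γt x)ᴴ), k1, Matrix.add_mul, Matrix.mul_add]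
    simp only [Matrix.mul_assoc]
    abel
end

section
/- Let p ∈ ℕ, ℓ > 0, j = diag(I_p, −I_p), J = [[0, I_p],[I_p, 0]], Θ = (1/√2)·[[I_p, −I_p],[I_p, I_p]] (so Θ j Θ* = J). Let β, γ : [0,2ℓ] → ℂ^{p×2p} be differentiable with derivatives having entries in L²(0,2ℓ), and assume: β(0) = (1/√2)[I_p I_p], γ(0) = (1/√2)[−I_p I_p], and for all x ∈ [0,2ℓ]: β(x) J γ(x)* = 0, β(x) J β(x)* = I_p, γ(x) J γ(x)* = −I_p, β′(x) J β(x)* = 0, γ′(x) J γ(x)* = 0. Define v(x) := 2i β′(2x) J γ(2x)* for x ∈ [0,ℓ], V(x) = [[0, v(x)],[v(x)*, 0]], and y(x) := [β(2x); γ(2x)]·J Θ j (the 2p×2p matrix whose top block row is β(2x) and bottom block row is γ(2x), multiplied on the right by JΘj). Then y(0) = I_{2p}, y(x) j y(x)* = j for all x, and y′(x) = i j V(x) y(x) for a.e. x ∈ [0,ℓ]. In other words, y is the fundamental solution u(·,0) of the Dirac system with potential v, and β(x) = [I_p 0]y(x/2)Θ*, γ(x) = [0 I_p]y(x/2)Θ*.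 -/
open MeasureTheory Matrix Set

private lemma smul_fromRows' {m₁ m₂ n : Type*} (c : ℂ) (A : Matrix m₁ n ℂ) (B : Matrix m₂ n ℂ) :
    c • Matrix.fromRows A B = Matrix.fromRows (c • A) (c • B) := by
  ext (i | i) k <;> simp [Matrix.fromRows_apply_inl, Matrix.fromRows_apply_inr]

private lemma hasDerivWithinAt_entry_mul {m n q : Type*} [Fintype n]
    {A : ℝ → Matrix m n ℂ} {B : ℝ → Matrix n q ℂ}
    {A' : Matrix m n ℂ} {B' : Matrix n q ℂ} {s : Set ℝ} {x : ℝ}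
    (hA : ∀ i k, HasDerivWithinAt (fun t => A t i k) (A' i k) s x)
    (hB : ∀ i k, HasDerivWithinAt (fun t => B t i k) (B' i k) s x) (i : m) (k : q) :
    HasDerivWithinAt (fun t => (A t * B t) i k) ((A' * B x + A x * B') i k) s x := by
  have h : ∀ l ∈ Finset.univ, HasDerivWithinAt (fun t => A t i l * B t l k)
      (A' i l * B x l k + A x i l * B' l k) s x := fun l _ => (hA i l).mul (hB l k)
  have h2 := HasDerivWithinAt.fun_sum h
  simp only [Matrix.mul_apply, Matrix.add_apply, Finset.sum_add_distrib] at h2 ⊢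
  exact h2

private lemma inv_two_smul_two {m : Type*} [Fintype m] [DecidableEq m] :
    ((2:ℂ)⁻¹) • (2 : Matrix m m ℂ) = 1 := by
  rw [show (2 : Matrix m m ℂ) = 1 + 1 from (one_add_one_eq_two).symm, smul_add, ← add_smul]
  norm_num

private lemma core_alg {m n : Type*} [Fintype m] [Fintype n] [DecidableEq n]
    {J : Matrix n n ℂ} {b b' g g' : Matrix m n ℂ}
    (hJJ : J * J = 1) (hJH : Jᴴ = J)
    (hb'b : b' * J * bᴴ = 0) (hg'g : g' * J * gᴴ = 0)
    (hcomp : bᴴ * b - gᴴ * g = J)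
    (hder : b' * J * gᴴ + b * J * g'ᴴ = 0) :
    b' * J * gᴴ * g = -b' ∧ g * J * b'ᴴ * b = -g' := by
  have hgg : gᴴ * g = bᴴ * b - J := by rw [← hcomp]; abel
  have hbb : bᴴ * b = J + gᴴ * g := by rw [← hcomp]; abel
  constructor
  · calc b' * J * gᴴ * g = (b' * J) * (gᴴ * g) := Matrix.mul_assoc _ _ _
      _ = (b' * J) * (bᴴ * b) - (b' * J) * J := by rw [hgg, Matrix.mul_sub]
      _ = (b' * J * bᴴ) * b - b' * (J * J) := by
            rw [← Matrix.mul_assoc (b' * J) bᴴ b, Matrix.mul_assoc b' J J]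
      _ = -b' := by rw [hb'b, hJJ, Matrix.zero_mul, Matrix.mul_one, zero_sub]
  · have hgb : g * J * b'ᴴ = -(g' * J * bᴴ) := by
      have h := congrArg Matrix.conjTranspose hder
      simp only [Matrix.conjTranspose_add, Matrix.conjTranspose_mul,
        Matrix.conjTranspose_conjTranspose, hJH, Matrix.conjTranspose_zero,
        ← Matrix.mul_assoc] at h
      exact eq_neg_of_add_eq_zero_left h
    calc g * J * b'ᴴ * b = -((g' * J * bᴴ) * b) := by rw [hgb, Matrix.neg_mul]
      _ = -((g' * J) * (bᴴ * b)) := by rw [Matrix.mul_assoc (g' * J) bᴴ b]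
      _ = -((g' * J) * J + (g' * J) * (gᴴ * g)) := by rw [hbb, Matrix.mul_add]
      _ = -(g' * (J * J) + (g' * J * gᴴ) * g) := by
            rw [Matrix.mul_assoc g' J J, ← Matrix.mul_assoc (g' * J) gᴴ g]
      _ = -g' := by rw [hJJ, hg'g, Matrix.mul_one, Matrix.zero_mul, add_zero]


/-- **Step 1 (formulas (C40)–(C48)) of the proof of Theorem 4.2 of the paper.**
Let `β, γ : [0,2ℓ] → ℂ^{p×2p}` be differentiable with square-integrable derivatives,
`β(0) = (1/√2)[I_p I_p]`, `γ(0) = (1/√2)[-I_p I_p]`, `βJγ* ≡ 0`, `βJβ* ≡ I_p`,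
`γJγ* ≡ -I_p`, `β′Jβ* ≡ 0` and `γ′Jγ* ≡ 0`.  Setting `v(x) = 2iβ′(2x)Jγ(2x)*`,
`V = [[0,v],[v*,0]]` and `y(x) = [β(2x); γ(2x)]JΘj`, we have `y(0) = I_{2p}`,
`y j y* ≡ j` and `y′ = ijVy` a.e. on `[0,ℓ]`; that is, `y` is the fundamental solution
`u(·,0)` of the Dirac system with potential `v`, and `β(x) = [I_p 0]y(x/2)Θ*`,
`γ(x) = [0 I_p]y(x/2)Θ*`. -/
theorem beta_gamma_generate_dirac_system
    (p : ℕ) (ℓ : ℝ) (hℓ : 0 < ℓ)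
    (j J Θ : Matrix (Fin p ⊕ Fin p) (Fin p ⊕ Fin p) ℂ)
    (hj : j = Matrix.fromBlocks 1 0 0 (-1))
    (hJ : J = Matrix.fromBlocks 0 1 1 0)
    (hΘ : Θ = (((Real.sqrt 2 : ℝ) : ℂ))⁻¹ • Matrix.fromBlocks 1 (-1) 1 1)
    (β β' γ γ' : ℝ → Matrix (Fin p) (Fin p ⊕ Fin p) ℂ)
    (hβdiff : ∀ x ∈ Set.Icc (0:ℝ) (2*ℓ), ∀ i k,
      HasDerivWithinAt (fun y => β y i k) (β' x i k) (Set.Icc (0:ℝ) (2*ℓ)) x)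
    (hγdiff : ∀ x ∈ Set.Icc (0:ℝ) (2*ℓ), ∀ i k,
      HasDerivWithinAt (fun y => γ y i k) (γ' x i k) (Set.Icc (0:ℝ) (2*ℓ)) x)
    (hβ'L2 : ∀ i k, MemLp (fun x => β' x i k) 2 (volume.restrict (Set.Ioc (0:ℝ) (2*ℓ))))
    (hγ'L2 : ∀ i k, MemLp (fun x => γ' x i k) 2 (volume.restrict (Set.Ioc (0:ℝ) (2*ℓ))))
    (hβ0 : β 0 = (((Real.sqrt 2 : ℝ) : ℂ))⁻¹ • Matrix.fromCols 1 1)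
    (hγ0 : γ 0 = (((Real.sqrt 2 : ℝ) : ℂ))⁻¹ • Matrix.fromCols (-1) 1)
    (hβγ : ∀ x ∈ Set.Icc (0:ℝ) (2*ℓ), β x * J * (γ x)ᴴ = 0)
    (hββ : ∀ x ∈ Set.Icc (0:ℝ) (2*ℓ), β x * J * (β x)ᴴ = 1)
    (hγγ : ∀ x ∈ Set.Icc (0:ℝ) (2*ℓ), γ x * J * (γ x)ᴴ = -1)
    (hβ'β : ∀ x ∈ Set.Icc (0:ℝ) (2*ℓ), β' x * J * (β x)ᴴ = 0)
    (hγ'γ : ∀ x ∈ Set.Icc (0:ℝ) (2*ℓ), γ' x * J * (γ x)ᴴ = 0)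
    (v : ℝ → Matrix (Fin p) (Fin p) ℂ)
    (hv : ∀ x, v x = ((2 : ℂ) * Complex.I) • (β' (2*x) * J * (γ (2*x))ᴴ))
    (V : ℝ → Matrix (Fin p ⊕ Fin p) (Fin p ⊕ Fin p) ℂ)
    (hV : ∀ x, V x = Matrix.fromBlocks 0 (v x) ((v x)ᴴ) 0)
    (y : ℝ → Matrix (Fin p ⊕ Fin p) (Fin p ⊕ Fin p) ℂ)
    (hy : ∀ x, y x = Matrix.fromRows (β (2*x)) (γ (2*x)) * (J * Θ * j)) :
    y 0 = 1 ∧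
    (∀ x ∈ Set.Icc (0:ℝ) ℓ, y x * j * (y x)ᴴ = j) ∧
    (∀ᵐ x ∂(volume.restrict (Set.Icc (0:ℝ) ℓ)), ∀ i k,
      HasDerivWithinAt (fun t => y t i k)
        ((Complex.I • (j * V x * y x)) i k) (Set.Icc (0:ℝ) ℓ) x) ∧
    (∀ x ∈ Set.Icc (0:ℝ) (2*ℓ),
      β x = (y (x/2) * Θᴴ).submatrix Sum.inl id ∧
      γ x = (y (x/2) * Θᴴ).submatrix Sum.inr id) := by
  set c : ℂ := (((Real.sqrt 2 : ℝ) : ℂ))⁻¹ with hc_def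
  have h2c : ((Real.sqrt 2 : ℝ) : ℂ) * ((Real.sqrt 2 : ℝ) : ℂ) = 2 := by
    norm_cast
    exact Real.mul_self_sqrt (by norm_num)
  have hcc : c * c = (2:ℂ)⁻¹ := by rw [hc_def, ← mul_inv, h2c]
  have hstarc : star c = c := by
    rw [hc_def]
    simp [Complex.star_def, map_inv₀, Complex.conj_ofReal]
  -- basic block facts
  have hJH : Jᴴ = J := by
    rw [hJ, Matrix.fromBlocks_conjTranspose]
    simp
  have hjH : jᴴ = j := by
    rw [hj, Matrix.fromBlocks_conjTranspose]
    simp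
  have hJJ : J * J = 1 := by
    rw [hJ, Matrix.fromBlocks_multiply]
    simp [Matrix.fromBlocks_one]
  have hjj : j * j = 1 := by
    rw [hj, Matrix.fromBlocks_multiply]
    simp [Matrix.fromBlocks_one]
  have hM : J * Θ * j = c • Matrix.fromBlocks 1 (-1) 1 1 := by
    rw [hJ, hΘ, hj, Matrix.mul_smul, Matrix.smul_mul]
    congr 1
    rw [Matrix.fromBlocks_multiply, Matrix.fromBlocks_multiply]
    congr 1 <;> simp
  have hMH : (J * Θ * j)ᴴ = c • Matrix.fromBlocks 1 1 (-1) 1 := by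
    rw [hM, Matrix.conjTranspose_smul, hstarc, Matrix.fromBlocks_conjTranspose]
    simp
  have hMΘ : (J * Θ * j) * Θᴴ = 1 := by
    rw [hM, hΘ, Matrix.conjTranspose_smul, hstarc, Matrix.fromBlocks_conjTranspose,
      Matrix.smul_mul, Matrix.mul_smul, smul_smul, hcc, Matrix.fromBlocks_multiply]
    ext (i | i) (k | k) <;>
      simp [Matrix.one_apply] <;> split_ifs <;> norm_num
  have hMjM : (J * Θ * j) * j * (J * Θ * j)ᴴ = J := by
    rw [hMH, hM, hj, hJ, Matrix.smul_mul, Matrix.mul_smul, Matrix.smul_mul, smul_smul, hcc,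
      Matrix.fromBlocks_multiply, Matrix.fromBlocks_multiply]
    ext (i | i) (k | k) <;>
      simp [Matrix.one_apply] <;> split_ifs <;> norm_num
  -- Part 1 : y 0 = 1
  have part1 : y 0 = 1 := by
    rw [hy 0, show (2:ℝ) * 0 = 0 by ring, hβ0, hγ0, hM,
      show Matrix.fromRows (c • Matrix.fromCols 1 1) (c • Matrix.fromCols (-1) 1)
        = c • Matrix.fromBlocks 1 1 (-1) 1 from by
          rw [← smul_fromRows', Matrix.fromRows_fromCols_eq_fromBlocks],
      Matrix.smul_mul, Matrix.mul_smul, smul_smul, hcc, Matrix.fromBlocks_multiply]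
    ext (i | i) (k | k) <;>
      simp [Matrix.one_apply] <;> split_ifs <;> norm_num
  -- A J Aᴴ = j
  have hAJA : ∀ s ∈ Set.Icc (0:ℝ) (2*ℓ),
      Matrix.fromRows (β s) (γ s) * J * (Matrix.fromRows (β s) (γ s))ᴴ = j := by
    intro s hs
    have hγβ : γ s * J * (β s)ᴴ = 0 := by
      have h := congrArg Matrix.conjTranspose (hβγ s hs)
      rw [Matrix.conjTranspose_mul, Matrix.conjTranspose_mul,
        Matrix.conjTranspose_conjTranspose, hJH, Matrix.conjTranspose_zero,
        ← Matrix.mul_assoc] at h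
      exact h
    rw [Matrix.fromRows_mul, Matrix.conjTranspose_fromRows_eq_fromCols_conjTranspose,
      Matrix.fromRows_mul_fromCols, hββ s hs, hβγ s hs, hγβ, hγγ s hs, hj]
  -- completeness relation
  have hcomp : ∀ s ∈ Set.Icc (0:ℝ) (2*ℓ),
      (β s)ᴴ * β s - (γ s)ᴴ * γ s = J := by
    intro s hs
    set A := Matrix.fromRows (β s) (γ s) with hA_def
    have h1 : A * (J * Aᴴ * j) = 1 := by
      calc A * (J * Aᴴ * j) = (A * J * Aᴴ) * j := by simp only [Matrix.mul_assoc]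
        _ = j * j := by rw [hAJA s hs]
        _ = 1 := hjj
    have h2 : (J * Aᴴ * j) * A = 1 := mul_eq_one_comm.mp h1
    have h3 : Aᴴ * j * A = J := by
      calc Aᴴ * j * A = (J * J) * (Aᴴ * j * A) := by rw [hJJ, Matrix.one_mul]
        _ = J * ((J * Aᴴ * j) * A) := by simp only [Matrix.mul_assoc]
        _ = J := by rw [h2, Matrix.mul_one]
    rw [hA_def, Matrix.conjTranspose_fromRows_eq_fromCols_conjTranspose, hj,
      Matrix.fromCols_mul_fromBlocks, Matrix.fromCols_mul_fromRows] at h3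
    simp only [Matrix.mul_one, Matrix.mul_zero, Matrix.mul_neg, Matrix.neg_mul,
      add_zero, zero_add, mul_neg_one, neg_mul] at h3
    rw [sub_eq_add_neg]
    convert h3 using 2 <;> simp
  -- derivative of entries of conj transpose of γ
  have hγH : ∀ s ∈ Set.Icc (0:ℝ) (2*ℓ), ∀ l k',
      HasDerivWithinAt (fun t => (γ t)ᴴ l k') ((γ' s)ᴴ l k') (Set.Icc (0:ℝ) (2*ℓ)) s := by
    intro s hs l k'
    simpa only [Matrix.conjTranspose_apply] using (hγdiff s hs k' l).star
  have hJγH : ∀ s ∈ Set.Icc (0:ℝ) (2*ℓ), ∀ l k',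
      HasDerivWithinAt (fun t => (J * (γ t)ᴴ) l k') ((J * (γ' s)ᴴ) l k')
        (Set.Icc (0:ℝ) (2*ℓ)) s := by
    intro s hs l k'
    have h := hasDerivWithinAt_entry_mul (A := fun _ => J) (A' := 0)
      (B := fun t => (γ t)ᴴ) (B' := (γ' s)ᴴ)
      (fun i k => hasDerivWithinAt_const _ _ _) (hγH s hs) l k'
    simpa using h
  -- the key differentiated identity
  have hder : ∀ s ∈ Set.Icc (0:ℝ) (2*ℓ),
      β' s * J * (γ s)ᴴ + β s * J * (γ' s)ᴴ = 0 := by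
    intro s hs
    have hU : UniqueDiffWithinAt ℝ (Set.Icc (0:ℝ) (2*ℓ)) s :=
      (uniqueDiffOn_Icc (by linarith)) s hs
    ext i k
    have h1 := hasDerivWithinAt_entry_mul (A := β) (A' := β' s)
      (B := fun t => J * (γ t)ᴴ) (B' := J * (γ' s)ᴴ)
      (fun i k => hβdiff s hs i k) (hJγH s hs) i k
    have h0 : HasDerivWithinAt (fun t => (β t * (J * (γ t)ᴴ)) i k) 0
        (Set.Icc (0:ℝ) (2*ℓ)) s := by
      apply (hasDerivWithinAt_const s _ (0:ℂ)).congr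
      · intro t ht
        rw [← Matrix.mul_assoc, hβγ t ht, Matrix.zero_apply]
      · rw [← Matrix.mul_assoc, hβγ s hs, Matrix.zero_apply]
    have e1 := h1.derivWithin hU
    have e0 := h0.derivWithin hU
    have e : (β' s * (J * (γ s)ᴴ) + β s * (J * (γ' s)ᴴ)) i k = 0 := by rw [← e1, e0]
    simpa [Matrix.mul_assoc] using e
  -- Part 2
  have part2 : ∀ x ∈ Set.Icc (0:ℝ) ℓ, y x * j * (y x)ᴴ = j := by
    intro x hx
    have hs : (2*x) ∈ Set.Icc (0:ℝ) (2*ℓ) := ⟨by linarith [hx.1], by linarith [hx.2]⟩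
    set A := Matrix.fromRows (β (2*x)) (γ (2*x)) with hA_def
    set M := J * Θ * j with hM_def
    calc y x * j * (y x)ᴴ = (A * M) * j * (Mᴴ * Aᴴ) := by
          rw [hy x, Matrix.conjTranspose_mul]
      _ = A * (M * j * Mᴴ) * Aᴴ := by simp only [Matrix.mul_assoc]
      _ = A * J * Aᴴ := by rw [hMjM]
      _ = j := hAJA (2*x) hs
  -- key identity for the derivative
  have keyId : ∀ x ∈ Set.Icc (0:ℝ) ℓ,
      Complex.I • (j * V x * y x)
        = ((2:ℂ) • Matrix.fromRows (β' (2*x)) (γ' (2*x))) * (J * Θ * j) := by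
    intro x hx
    have hs : (2*x) ∈ Set.Icc (0:ℝ) (2*ℓ) := ⟨by linarith [hx.1], by linarith [hx.2]⟩
    have hI2 : Complex.I * ((2:ℂ) * Complex.I) = -2 := by
      rw [mul_comm, mul_assoc, Complex.I_mul_I]
      ring
    have core := core_alg hJJ hJH (hβ'β (2*x) hs) (hγ'γ (2*x) hs)
      (hcomp (2*x) hs) (hder (2*x) hs)
    have K1 : Complex.I • (v x * γ (2*x)) = (2:ℂ) • β' (2*x) := by
      rw [hv x, Matrix.smul_mul, smul_smul, core.1, hI2]
      module
    have hstar2I : star ((2:ℂ) * Complex.I) = -((2:ℂ) * Complex.I) := by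
      simp [Complex.star_def, mul_comm]
    have hvH : (v x)ᴴ = (-((2:ℂ) * Complex.I)) • (γ (2*x) * J * (β' (2*x))ᴴ) := by
      rw [hv x, Matrix.conjTranspose_smul, hstar2I, Matrix.conjTranspose_mul,
        Matrix.conjTranspose_mul, Matrix.conjTranspose_conjTranspose, hJH,
        ← Matrix.mul_assoc]
    have hI2' : Complex.I * -((2:ℂ) * Complex.I) = 2 := by
      rw [mul_neg, hI2, neg_neg]
    have K2 : Complex.I • (-((v x)ᴴ * β (2*x))) = (2:ℂ) • γ' (2*x) := by
      rw [hvH, Matrix.smul_mul, core.2]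
      simp only [smul_neg, neg_neg, smul_smul]
      rw [hI2']
    have hjV : j * V x = Matrix.fromBlocks 0 (v x) (-(v x)ᴴ) 0 := by
      rw [hj, hV x, Matrix.fromBlocks_multiply]
      simp
    calc Complex.I • (j * V x * y x)
        = Complex.I • ((j * V x * Matrix.fromRows (β (2*x)) (γ (2*x))) * (J * Θ * j)) := by
          rw [hy x]; simp only [Matrix.mul_assoc]
      _ = (Complex.I • (Matrix.fromBlocks 0 (v x) (-(v x)ᴴ) 0
            * Matrix.fromRows (β (2*x)) (γ (2*x)))) * (J * Θ * j) := by
          rw [hjV, Matrix.smul_mul]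
      _ = (Complex.I • Matrix.fromRows (v x * γ (2*x)) (-((v x)ᴴ * β (2*x))))
            * (J * Θ * j) := by
          rw [Matrix.fromBlocks_mul_fromRows]
          congr 2 <;> simp [Matrix.neg_mul]
      _ = Matrix.fromRows ((2:ℂ) • β' (2*x)) ((2:ℂ) • γ' (2*x)) * (J * Θ * j) := by
          rw [smul_fromRows', K1, K2]
      _ = ((2:ℂ) • Matrix.fromRows (β' (2*x)) (γ' (2*x))) * (J * Θ * j) := by
          rw [smul_fromRows']
  -- Part 3
  have part3 : ∀ x ∈ Set.Icc (0:ℝ) ℓ, ∀ i k,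
      HasDerivWithinAt (fun t => y t i k)
        ((Complex.I • (j * V x * y x)) i k) (Set.Icc (0:ℝ) ℓ) x := by
    intro x hx i k
    have hs : (2*x) ∈ Set.Icc (0:ℝ) (2*ℓ) := ⟨by linarith [hx.1], by linarith [hx.2]⟩
    have h2t : HasDerivWithinAt (fun t : ℝ => 2*t) 2 (Set.Icc (0:ℝ) ℓ) x := by
      simpa using (hasDerivWithinAt_id x (Set.Icc (0:ℝ) ℓ)).const_mul (2:ℝ)
    have hmaps : Set.MapsTo (fun t : ℝ => 2*t) (Set.Icc (0:ℝ) ℓ) (Set.Icc (0:ℝ) (2*ℓ)) := by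
      intro t ht
      simp only [Set.mem_Icc] at *
      constructor <;> linarith [ht.1, ht.2]
    have hAent : ∀ i m, HasDerivWithinAt
        (fun t => Matrix.fromRows (β (2*t)) (γ (2*t)) i m)
        (((2:ℂ) • Matrix.fromRows (β' (2*x)) (γ' (2*x))) i m) (Set.Icc (0:ℝ) ℓ) x := by
      intro i m
      cases i with
      | inl a =>
        have h := HasDerivWithinAt.scomp x (hβdiff (2*x) hs a m) h2t hmaps
        simpa [Function.comp_def, Matrix.fromRows_apply_inl, Matrix.fromRows_apply_inr, Complex.real_smul] using h
      | inr a =>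
        have h := HasDerivWithinAt.scomp x (hγdiff (2*x) hs a m) h2t hmaps
        simpa [Function.comp_def, Matrix.fromRows_apply_inl, Matrix.fromRows_apply_inr, Complex.real_smul] using h
    have h := hasDerivWithinAt_entry_mul
      (A := fun t => Matrix.fromRows (β (2*t)) (γ (2*t)))
      (A' := (2:ℂ) • Matrix.fromRows (β' (2*x)) (γ' (2*x)))
      (B := fun _ => J * Θ * j) (B' := (0 : Matrix (Fin p ⊕ Fin p) (Fin p ⊕ Fin p) ℂ))
      hAent (fun i k => hasDerivWithinAt_const _ _ _) i k
    have hval : (Complex.I • (j * V x * y x)) i k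
        = ((2:ℂ) • Matrix.fromRows (β' (2*x)) (γ' (2*x)) * (J * Θ * j)
           + Matrix.fromRows (β (2*x)) (γ (2*x))
             * (0 : Matrix (Fin p ⊕ Fin p) (Fin p ⊕ Fin p) ℂ)) i k := by
      rw [keyId x hx]
      simp
    rw [hval]
    refine h.congr (fun t _ => ?_) ?_ <;> rw [hy]
  -- Part 4
  have part4 : ∀ x ∈ Set.Icc (0:ℝ) (2*ℓ),
      β x = (y (x/2) * Θᴴ).submatrix Sum.inl id ∧
      γ x = (y (x/2) * Θᴴ).submatrix Sum.inr id := by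
    intro x hx
    have hx2 : 2 * (x/2) = x := by ring
    have h : y (x/2) * Θᴴ = Matrix.fromRows (β x) (γ x) := by
      rw [hy (x/2), hx2, Matrix.mul_assoc, hMΘ, Matrix.mul_one]
    constructor
    · ext i k
      rw [h]
      simp [Matrix.submatrix_apply, Matrix.fromRows_apply_inl, Matrix.fromRows_apply_inr]
    · ext i k
      rw [h]
      simp [Matrix.submatrix_apply, Matrix.fromRows_apply_inl, Matrix.fromRows_apply_inr]
  exact ⟨part1, part2,
    (ae_restrict_mem measurableSet_Icc).mono part3, part4⟩
end
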